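/- arXiv:1303.4482 — 6 statements merged into one kernel-verified Lean document; each statement's English description precedes it below -/
import Mathlib

section
/- For integers m, n with gcd(mn, q) = 1, the sum over all primitive Dirichlet characters χ mod q of χ(m)·conj(χ)(n) equals the sum over factorizations q = d·r with r dividing (m − n) of μ(d)·φ(r). -/
open Finset ArithmeticFunction
open scoped Classical

namespace DirichletCharacter

variable {R : Type*} [CommRing R] {q : ℕ}

lemma factorsThrough_gcd' [NeZero q] {χ : DirichletCharacter R q} {a b : ℕ}
    (ha : FactorsThrough χ a) (hb : FactorsThrough χ b) :
    FactorsThrough χ (Nat.gcd a b) := by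
  have haq : a ∣ q := ha.dvd
  have hbq : b ∣ q := hb.dvd
  have hgq : Nat.gcd a b ∣ q := (Nat.gcd_dvd_left a b).trans haq
  rw [factorsThrough_iff_ker_unitsMap hgq]
  rw [factorsThrough_iff_ker_unitsMap haq] at ha
  rw [factorsThrough_iff_ker_unitsMap hbq] at hb
  intro x hx
  rw [MonoidHom.mem_ker] at hx
  have hLq : Nat.lcm a b ∣ q := Nat.lcm_dvd haq hbq
  have hq0 : q ≠ 0 := NeZero.ne q
  have ha0 : a ≠ 0 := fun h0 => hq0 (Nat.eq_zero_of_zero_dvd (h0 ▸ haq))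
  have hb0 : b ≠ 0 := fun h0 => hq0 (Nat.eq_zero_of_zero_dvd (h0 ▸ hbq))
  have hL0 : Nat.lcm a b ≠ 0 := Nat.lcm_ne_zero ha0 hb0
  haveI : NeZero (Nat.lcm a b) := ⟨hL0⟩
  set xv : ℕ := ((x : ZMod q)).val with hxv
  have hxq : ((xv : ℕ) : ZMod q) = (x : ZMod q) := by
    simp [hxv, ZMod.natCast_val, ZMod.cast_id]
  -- from hx, deduce (xv : ZMod g) = 1
  have hx1 : ((xv : ℕ) : ZMod (Nat.gcd a b)) = 1 := by
    have h2 : ((ZMod.unitsMap hgq x : (ZMod (Nat.gcd a b))ˣ) : ZMod (Nat.gcd a b)) = 1 := by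
      rw [hx]; rfl
    rw [ZMod.unitsMap_def] at h2
    simp only [Units.coe_map, MonoidHom.coe_coe] at h2
    rw [← h2, ← hxq]
    simp [ZMod.castHom_apply, ZMod.cast_natCast hgq]
  -- integer divisibility
  have hgx : ((Nat.gcd a b : ℤ)) ∣ (xv : ℤ) - 1 := by
    have : (((xv : ℤ) - 1 : ℤ) : ZMod (Nat.gcd a b)) = 0 := by
      push_cast
      rw [hx1]; ring
    exact (ZMod.intCast_zmod_eq_zero_iff_dvd _ _).mp this
  obtain ⟨t, ht⟩ := hgx
  set y : ℤ := 1 + a * (Nat.gcdA a b * t) with hy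
  have hya : (a : ℤ) ∣ y - 1 := ⟨Nat.gcdA a b * t, by rw [hy]; ring⟩
  have hyb : (b : ℤ) ∣ y - xv := by
    refine ⟨-(Nat.gcdB a b * t), ?_⟩
    have hg := Nat.gcd_eq_gcd_ab a b
    rw [hy]
    linear_combination (-1 : ℤ) * ht - t * hg
  -- coprimality of y with lcm
  have hca : IsCoprime y (a : ℤ) := by
    rw [hy]
    exact (isCoprime_one_left).add_mul_left_left _
  have hxb : IsCoprime (xv : ℤ) (b : ℤ) := by
    have h1 : Nat.Coprime xv q := ZMod.val_coe_unit_coprime x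
    have h2 : Nat.Coprime xv b := Nat.Coprime.coprime_dvd_right hbq h1
    exact Nat.isCoprime_iff_coprime.mpr h2
  have hcb : IsCoprime y (b : ℤ) := by
    obtain ⟨e, he⟩ := hyb
    have : y = (xv : ℤ) + (b : ℤ) * e := by linarith
    rw [this]
    exact hxb.add_mul_left_left e
  have hcL : IsCoprime y ((Nat.lcm a b : ℕ) : ℤ) := by
    refine (hca.mul_right hcb).of_isCoprime_of_dvd_right ?_
    exact_mod_cast Int.natCast_dvd_natCast.mpr (Nat.lcm_dvd_mul a b)
  -- a natural number representative of y mod L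
  set y' : ℕ := (y % (Nat.lcm a b : ℤ)).toNat with hy'
  have hLne : ((Nat.lcm a b : ℕ) : ℤ) ≠ 0 := by exact_mod_cast hL0
  have hy'int : (y' : ℤ) = y % (Nat.lcm a b : ℤ) :=
    Int.toNat_of_nonneg (Int.emod_nonneg y hLne)
  have hLyy' : ((Nat.lcm a b : ℕ) : ℤ) ∣ y - y' := by
    rw [hy'int, Int.emod_def]
    exact ⟨y / (Nat.lcm a b : ℤ), by ring⟩
  have hcy' : IsCoprime ((y' : ℕ) : ℤ) ((Nat.lcm a b : ℕ) : ℤ) := by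
    obtain ⟨c, hc⟩ := hLyy'
    have : ((y' : ℕ) : ℤ) = y + ((Nat.lcm a b : ℕ) : ℤ) * (-c) := by linarith
    rw [this]
    exact hcL.add_mul_left_left _
  have hcop : Nat.Coprime y' (Nat.lcm a b) := Nat.isCoprime_iff_coprime.mp hcy'
  set u : (ZMod (Nat.lcm a b))ˣ := ZMod.unitOfCoprime y' hcop with hu
  obtain ⟨Y, hY⟩ := ZMod.unitsMap_surjective hLq u
  have haL : a ∣ Nat.lcm a b := Nat.dvd_lcm_left a b
  have hbL : b ∣ Nat.lcm a b := Nat.dvd_lcm_right a b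
  -- unitsMap computations
  have hYa : ZMod.unitsMap haq Y = 1 := by
    have h1 : ZMod.unitsMap haq Y = ZMod.unitsMap haL u := by
      rw [← hY, ← MonoidHom.comp_apply, ZMod.unitsMap_comp]
    have h2 : ((ZMod.unitsMap haL u : (ZMod a)ˣ) : ZMod a) = ((y' : ℕ) : ZMod a) := by
      rw [ZMod.unitsMap_def]
      simp [hu, ZMod.coe_unitOfCoprime]
    have h3 : (a : ℤ) ∣ (y' : ℤ) - 1 := by
      have hd1 : (a : ℤ) ∣ y - y' := dvd_trans (by exact_mod_cast haL) hLyy'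
      have h6 := dvd_sub hya hd1
      have h7 : y - 1 - (y - y') = (y' : ℤ) - 1 := by ring
      rwa [h7] at h6
    have h4 : ((y' : ℕ) : ZMod a) = 1 := by
      have : (((y' : ℤ) - 1 : ℤ) : ZMod a) = 0 := (ZMod.intCast_zmod_eq_zero_iff_dvd _ _).mpr h3
      push_cast at this
      linear_combination this
    ext
    rw [h1, h2, h4]
    rfl
  have hYb : ZMod.unitsMap hbq Y = ZMod.unitsMap hbq x := by
    have h1 : ZMod.unitsMap hbq Y = ZMod.unitsMap hbL u := by
      rw [← hY, ← MonoidHom.comp_apply, ZMod.unitsMap_comp]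
    have h2 : ((ZMod.unitsMap hbL u : (ZMod b)ˣ) : ZMod b) = ((y' : ℕ) : ZMod b) := by
      rw [ZMod.unitsMap_def]
      simp [hu, ZMod.coe_unitOfCoprime]
    have h3 : (b : ℤ) ∣ (y' : ℤ) - xv := by
      have hd1 : (b : ℤ) ∣ y - y' := dvd_trans (by exact_mod_cast hbL) hLyy'
      have h5 := dvd_sub hyb hd1
      have : y - (xv:ℤ) - (y - y') = (y':ℤ) - xv := by ring
      rwa [this] at h5
    have h4 : ((y' : ℕ) : ZMod b) = ((xv : ℕ) : ZMod b) := by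
      have : (((y' : ℤ) - xv : ℤ) : ZMod b) = 0 := (ZMod.intCast_zmod_eq_zero_iff_dvd _ _).mpr h3
      push_cast at this
      linear_combination this
    have h6 : ((ZMod.unitsMap hbq x : (ZMod b)ˣ) : ZMod b) = ((xv : ℕ) : ZMod b) := by
      rw [ZMod.unitsMap_def]
      simp only [Units.coe_map, MonoidHom.coe_coe]
      rw [← hxq]
      simp
    ext
    rw [h1, h2, h4, ← h6]
  -- conclude
  have hxfact : x = Y * (Y⁻¹ * x) := by group
  have c1 : MulChar.toUnitHom χ Y = 1 := ha (MonoidHom.mem_ker.mpr hYa)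
  have c2 : MulChar.toUnitHom χ (Y⁻¹ * x) = 1 := by
    refine hb (MonoidHom.mem_ker.mpr ?_)
    rw [map_mul, map_inv, hYb]
    group
  rw [MonoidHom.mem_ker, hxfact, map_mul, c1, c2, one_mul]

lemma conductor_changeLevel' [NeZero q] {d : ℕ} (h : d ∣ q) (χ₀ : DirichletCharacter R d) :
    conductor (changeLevel h χ₀) = conductor χ₀ := by
  have hd0 : d ≠ 0 := fun h0 => NeZero.ne q (Nat.eq_zero_of_zero_dvd (h0 ▸ h))
  haveI : NeZero d := ⟨hd0⟩
  have hψ0 : conductor (changeLevel h χ₀) ≠ 0 := conductor_ne_zero _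
  refine le_antisymm ?_ ?_
  · have hft := factorsThrough_conductor χ₀
    refine Nat.sInf_le ⟨hft.dvd.trans h, hft.χ₀, ?_⟩
    rw [changeLevel_trans _ hft.dvd h, ← hft.eq_changeLevel]
  · have hA : FactorsThrough (changeLevel h χ₀) (Nat.gcd (conductor (changeLevel h χ₀)) d) :=
      factorsThrough_gcd' (factorsThrough_conductor _) (changeLevel_factorsThrough _ h)
    obtain ⟨hgq, χ₁, hχ₁⟩ := hA
    have hgd : Nat.gcd (conductor (changeLevel h χ₀)) d ∣ d := Nat.gcd_dvd_right _ _
    have heq : changeLevel h χ₀ = changeLevel h (changeLevel hgd χ₁) := by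
      rw [← changeLevel_trans _ hgd h]
      exact hχ₁
    have hx : χ₀ = changeLevel hgd χ₁ := changeLevel_injective h heq
    calc conductor χ₀ ≤ Nat.gcd (conductor (changeLevel h χ₀)) d := Nat.sInf_le ⟨hgd, χ₁, hx⟩
      _ ≤ conductor (changeLevel h χ₀) :=
        Nat.le_of_dvd (Nat.pos_of_ne_zero hψ0) (Nat.gcd_dvd_left _ _)

lemma changeLevel_natCast' [NeZero q] {d : ℕ} (h : d ∣ q) (χ₀ : DirichletCharacter R d)
    (k : ℕ) (hk : IsUnit ((k : ℕ) : ZMod q)) :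
    (changeLevel h χ₀) ((k : ℕ) : ZMod q) = χ₀ ((k : ℕ) : ZMod d) := by
  have h1 := changeLevel_eq_cast_of_dvd χ₀ h hk.unit
  rw [IsUnit.unit_spec] at h1
  rw [h1, ZMod.cast_natCast h]

end DirichletCharacter

open DirichletCharacter

/-- Sum over primitive characters mod `k` of `χ(m) * conj (χ(n))`. -/
noncomputable def primSum (m n k : ℕ) : ℂ :=
  ∑ χ : DirichletCharacter ℂ k,
    if χ.IsPrimitive then χ (m : ZMod k) * (starRingEnd ℂ) (χ (n : ZMod k)) else 0

lemma sum_all_characters_eq (k : ℕ) [NeZero k] (m n : ℕ)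
    (hm : Nat.Coprime m k) (hn : Nat.Coprime n k) :
    (∑ χ : DirichletCharacter ℂ k, χ (m : ZMod k) * (starRingEnd ℂ) (χ (n : ZMod k)))
      = if (k : ℤ) ∣ (m : ℤ) - (n : ℤ) then (Nat.totient k : ℂ) else 0 := by
  have hnu : IsUnit ((n : ℕ) : ZMod k) := (ZMod.isUnit_iff_coprime n k).mpr hn
  have key := DirichletCharacter.sum_char_inv_mul_char_eq ℂ hnu ((m : ℕ) : ZMod k)
  have hterm : ∀ χ : DirichletCharacter ℂ k,
      χ (m : ZMod k) * (starRingEnd ℂ) (χ (n : ZMod k))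
        = χ ((n : ZMod k))⁻¹ * χ (m : ZMod k) := by
    intro χ
    have hinv : χ (((n : ℕ) : ZMod k))⁻¹ = (χ ((n : ℕ) : ZMod k))⁻¹ :=
      eq_inv_of_mul_eq_one_left (by rw [← map_mul, ZMod.inv_mul_of_unit _ hnu, map_one])
    rw [starRingEnd_apply, MulChar.star_apply', MulChar.inv_apply_eq_inv', hinv, mul_comm]
  rw [Finset.sum_congr rfl (fun χ _ => hterm χ), key]
  have hcond : (((n : ℕ) : ZMod k) = ((m : ℕ) : ZMod k)) ↔ ((k : ℤ) ∣ (m : ℤ) - (n : ℤ)) := by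
    rw [ZMod.natCast_eq_natCast_iff]
    exact Nat.modEq_iff_dvd
  simp only [hcond]

lemma sum_all_eq_sum_prim (k : ℕ) [NeZero k] (m n : ℕ)
    (hm : IsUnit ((m : ℕ) : ZMod k)) (hn : IsUnit ((n : ℕ) : ZMod k)) :
    (∑ χ : DirichletCharacter ℂ k, χ (m : ZMod k) * (starRingEnd ℂ) (χ (n : ZMod k)))
      = ∑ d ∈ k.divisors, primSum m n d := by
  rw [← Finset.sum_fiberwise_of_maps_to
    (g := fun χ : DirichletCharacter ℂ k => conductor χ)
    (fun χ _ => Nat.mem_divisors.mpr ⟨conductor_dvd_level χ, NeZero.ne k⟩)]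
  refine Finset.sum_congr rfl fun d hd => ?_
  obtain ⟨hdk, hk0⟩ := Nat.mem_divisors.mp hd
  haveI : NeZero d := ⟨fun h0 => hk0 (Nat.eq_zero_of_zero_dvd (h0 ▸ hdk))⟩
  rw [primSum, ← Finset.sum_filter]
  refine (Finset.sum_bij (fun (χ₀ : DirichletCharacter ℂ d) _ => changeLevel hdk χ₀)
    ?_ ?_ ?_ ?_).symm
  · intro χ₀ hχ₀
    simp only [Finset.mem_filter, Finset.mem_univ, true_and] at hχ₀ ⊢
    rw [conductor_changeLevel' hdk χ₀]
    exact hχ₀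
  · intro χ₁ h1 χ₂ h2 hEq
    exact changeLevel_injective hdk hEq
  · intro χ hχ
    simp only [Finset.mem_filter, Finset.mem_univ, true_and] at hχ
    have hft : FactorsThrough χ d := hχ ▸ factorsThrough_conductor χ
    obtain ⟨hdvd, χ₀, hχ₀⟩ := hft
    refine ⟨χ₀, ?_, hχ₀.symm⟩
    simp only [Finset.mem_filter, Finset.mem_univ, true_and]
    have h2 : conductor (changeLevel hdk χ₀) = conductor χ₀ := conductor_changeLevel' hdk χ₀
    rw [show changeLevel hdk χ₀ = χ from hχ₀.symm] at h2
    rw [IsPrimitive, ← h2]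
    exact hχ
  · intro χ₀ hχ₀
    rw [changeLevel_natCast' hdk χ₀ m hm, changeLevel_natCast' hdk χ₀ n hn]

/-- For integers `m, n` coprime to `q`, the sum over all primitive Dirichlet characters
`χ` mod `q` of `χ(m) * conj(χ(n))` equals `∑_{q = d·r, r ∣ m - n} μ(d) φ(r)`. -/
theorem sum_primitive_char_orthogonality (q : ℕ) [NeZero q] (m n : ℕ)
    (h : Nat.Coprime (m * n) q) :
    ∑ᶠ χ : DirichletCharacter ℂ q,
        (if χ.IsPrimitive then χ (m : ZMod q) * (starRingEnd ℂ) (χ (n : ZMod q)) else 0)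
      = ∑ r ∈ q.divisors,
          (if (r : ℤ) ∣ (m : ℤ) - (n : ℤ)
            then (moebius (q / r) : ℂ) * (Nat.totient r : ℂ) else 0) := by
  have hmq : Nat.Coprime m q := Nat.Coprime.coprime_dvd_left (dvd_mul_right m n) h
  have hnq : Nat.Coprime n q := Nat.Coprime.coprime_dvd_left (dvd_mul_left n m) h
  have H : ∀ k > 0, k ∈ {k : ℕ | k ∣ q} → (∑ i ∈ k.divisors, primSum m n i)
      = (fun k : ℕ => if (k : ℤ) ∣ (m : ℤ) - (n : ℤ) then (Nat.totient k : ℂ) else 0) k := by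
    intro k hk hkq
    haveI : NeZero k := ⟨hk.ne'⟩
    have hmk : Nat.Coprime m k := hmq.coprime_dvd_right hkq
    have hnk : Nat.Coprime n k := hnq.coprime_dvd_right hkq
    rw [← sum_all_eq_sum_prim k m n ((ZMod.isUnit_iff_coprime m k).mpr hmk)
      ((ZMod.isUnit_iff_coprime n k).mpr hnk)]
    exact sum_all_characters_eq k m n hmk hnk
  have key := ((ArithmeticFunction.sum_eq_iff_sum_smul_moebius_eq_on (R := ℂ)
      {k | k ∣ q} (fun a b hab hb => hab.trans hb)).mp H) q (Nat.pos_of_ne_zero (NeZero.ne q))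
      dvd_rfl
  rw [finsum_eq_sum_of_fintype]
  have h0 : (∑ χ : DirichletCharacter ℂ q,
      if χ.IsPrimitive then χ (m : ZMod q) * (starRingEnd ℂ) (χ (n : ZMod q)) else 0)
        = primSum m n q := rfl
  rw [h0, ← key]
  rw [Nat.sum_divisorsAntidiagonal' (f := fun x y => (moebius x) •
    (if (y : ℤ) ∣ (m : ℤ) - (n : ℤ) then (Nat.totient y : ℂ) else 0))]
  refine Finset.sum_congr rfl fun r hr => ?_
  rw [smul_ite, smul_zero, zsmul_eq_mul]
end

section
/- For integers m, n with gcd(mn, q) = 1, the sum over all primitive even Dirichlet characters χ mod q (i.e., primitive characters with χ(−1) = 1) of χ(m)·conj(χ)(n) equals one half of the sum over factorizations q = d·r with r dividing m − n or r dividing m + n (counted with multiplicity if both hold) of μ(d)·φ(r). -/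
open Finset ArithmeticFunction
open scoped Classical

open DirichletCharacter

lemma changeLevel_intCast {e d : ℕ} [NeZero d] (h : e ∣ d) (ψ : DirichletCharacter ℂ e)
    (a : ℤ) (ha : IsUnit ((a : ZMod d))) :
    changeLevel h ψ ((a : ZMod d)) = ψ ((a : ZMod e)) := by
  have h1 := DirichletCharacter.changeLevel_eq_cast_of_dvd ψ h ha.unit
  rw [ha.unit_spec] at h1
  rw [h1]
  congr 1
  rw [← ZMod.castHom_apply (h := h)]
  exact map_intCast _ a

lemma conductor_changeLevel_prim {e d : ℕ} [NeZero d] (h : e ∣ d) (ψ : DirichletCharacter ℂ e)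
    (hψ : ψ.IsPrimitive) : (changeLevel h ψ).conductor = e := by
  have hd : d ≠ 0 := NeZero.ne d
  have he : e ≠ 0 := fun h0 => hd (by simpa [h0] using h)
  haveI : NeZero e := ⟨he⟩
  set χ := changeLevel h ψ with hχdef
  have hle : χ.conductor ≤ e := Nat.sInf_le (changeLevel_factorsThrough ψ h)
  set c := χ.conductor with hc
  have hcd : c ∣ d := conductor_dvd_level χ
  have hc0 : c ≠ 0 := conductor_ne_zero χ
  have hfac : χ = changeLevel hcd (factorsThrough_conductor χ).χ₀ :=
    (factorsThrough_conductor χ).eq_changeLevel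
  set θ := (factorsThrough_conductor χ).χ₀ with hθ
  have hge : Nat.gcd c e ∣ e := Nat.gcd_dvd_right c e
  have hfψ : ψ.FactorsThrough (Nat.gcd c e) := by
    rw [factorsThrough_iff_ker_unitsMap hge]
    intro x hx
    -- hx : ZMod.unitsMap hge x = 1
    have hv : (x : ZMod e).val ≡ 1 [MOD Nat.gcd e c] := by
      rw [Nat.gcd_comm]
      have h2 : (((x : ZMod e).val : ZMod (Nat.gcd c e))) = ((1 : ℕ) : ZMod (Nat.gcd c e)) := by
        have h2 := congrArg (Units.val) hx
        rw [ZMod.unitsMap] at h2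
        simp only [Units.coe_map, MonoidHom.coe_coe, Units.val_one, ZMod.castHom_apply] at h2
        rw [← ZMod.natCast_val] at h2
        simpa using h2
      exact (ZMod.natCast_eq_natCast_iff _ _ _).mp h2
    obtain ⟨k, hk1, hk2⟩ := Nat.chineseRemainder' hv
    -- hk1 : k ≡ (x:ZMod e).val [MOD e], hk2 : k ≡ 1 [MOD c]
    have hke : Nat.Coprime k e := by
      have := ZMod.val_coe_unit_coprime x
      have hg := Nat.ModEq.gcd_eq hk1
      unfold Nat.Coprime at *
      omega
    have hkc : Nat.Coprime k c := by
      have hg := Nat.ModEq.gcd_eq hk2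
      simpa [Nat.Coprime] using hg
    have hlcm : Nat.lcm e c ∣ d := Nat.lcm_dvd h hcd
    haveI : NeZero (Nat.lcm e c) := ⟨fun h0 => hd (by simpa [h0] using hlcm)⟩
    have hkl : Nat.Coprime k (Nat.lcm e c) :=
      Nat.Coprime.coprime_dvd_right (Nat.lcm_dvd_mul e c) (hke.mul_right hkc)
    have hu : IsUnit ((k : ℕ) : ZMod (Nat.lcm e c)) := (ZMod.isUnit_iff_coprime k _).mpr hkl
    obtain ⟨y, hy⟩ := ZMod.unitsMap_surjective (n := Nat.lcm e c) (m := d) hlcm hu.unit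
    -- key: unitsMap (e ∣ d) y = x and unitsMap (c ∣ d) y = 1
    have hye : ZMod.unitsMap h y = x := by
      have h3 : ZMod.unitsMap (Nat.dvd_lcm_left e c) (ZMod.unitsMap hlcm y) = ZMod.unitsMap h y := by
        rw [← MonoidHom.comp_apply, ZMod.unitsMap_comp]
      rw [← h3, hy]
      ext
      rw [ZMod.unitsMap]
      simp only [Units.coe_map, MonoidHom.coe_coe]
      rw [hu.unit_spec, map_natCast]
      rw [show ((k : ZMod e)) = ((x : ZMod e).val : ZMod e) from
        (ZMod.natCast_eq_natCast_iff _ _ _).mpr hk1]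
      simp [ZMod.natCast_val, ZMod.cast_id]
    have hyc : ZMod.unitsMap hcd y = 1 := by
      have h3 : ZMod.unitsMap (Nat.dvd_lcm_right e c) (ZMod.unitsMap hlcm y) = ZMod.unitsMap hcd y := by
        rw [← MonoidHom.comp_apply, ZMod.unitsMap_comp]
      rw [← h3, hy]
      ext
      rw [ZMod.unitsMap]
      simp only [Units.coe_map, MonoidHom.coe_coe, Units.val_one]
      rw [hu.unit_spec, map_natCast]
      rw [show ((k : ZMod c)) = ((1 : ℕ) : ZMod c) from
        (ZMod.natCast_eq_natCast_iff _ _ _).mpr hk2]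
      simp
    have h1 : χ.toUnitHom y = ψ.toUnitHom x := by
      rw [hχdef, changeLevel_toUnitHom, MonoidHom.comp_apply, hye]
    have h2 : χ.toUnitHom y = 1 := by
      rw [hfac, changeLevel_toUnitHom, MonoidHom.comp_apply, hyc, map_one]
    simp only [MonoidHom.mem_ker]
    rw [← h1, h2]
  have h1 : e ≤ Nat.gcd c e := by
    have h4 := Nat.sInf_le ((mem_conductorSet_iff ψ).mpr hfψ)
    rwa [show sInf ψ.conductorSet = ψ.conductor from rfl, hψ] at h4
  have h2 : Nat.gcd c e ≤ c := Nat.le_of_dvd (Nat.pos_of_ne_zero hc0) (Nat.gcd_dvd_left c e)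
  omega

lemma sum_all_eq_sum_primitive (d : ℕ) [NeZero d] (F : ∀ e : ℕ, DirichletCharacter ℂ e → ℂ)
    (hF : ∀ (e : ℕ) (he : e ∣ d) (ψ : DirichletCharacter ℂ e), F d (changeLevel he ψ) = F e ψ) :
    ∑ χ : DirichletCharacter ℂ d, F d χ
      = ∑ e ∈ d.divisors, ∑ ψ : DirichletCharacter ℂ e,
          (if ψ.IsPrimitive then F e ψ else 0) := by
  have hd : d ≠ 0 := NeZero.ne d
  rw [← Finset.sum_fiberwise_of_maps_to (g := fun χ : DirichletCharacter ℂ d => χ.conductor)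
    (fun χ _ => Nat.mem_divisors.mpr ⟨conductor_dvd_level χ, hd⟩)]
  refine Finset.sum_congr rfl fun e he => ?_
  have hed : e ∣ d := Nat.dvd_of_mem_divisors he
  haveI : NeZero e := ⟨fun h0 => hd (by simpa [h0] using hed)⟩
  rw [← Finset.sum_filter]
  refine (Finset.sum_bij (fun ψ _ => changeLevel hed ψ) ?_ ?_ ?_ ?_).symm
  · intro ψ hψ
    simp only [Finset.mem_filter, Finset.mem_univ, true_and] at hψ ⊢
    exact conductor_changeLevel_prim hed ψ hψ
  · intro ψ₁ _ ψ₂ _ hh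
    exact changeLevel_injective hed hh
  · intro χ hχ
    simp only [Finset.mem_filter, Finset.mem_univ, true_and] at hχ
    have hft : χ.FactorsThrough e := by
      rw [← hχ]; exact factorsThrough_conductor χ
    obtain ⟨h', ψ, hψ⟩ := hft
    refine ⟨ψ, ?_, ?_⟩
    · simp only [Finset.mem_filter, Finset.mem_univ, true_and]
      -- ψ is primitive
      have hcc : χ.conductor ≤ ψ.conductor := by
        have : χ.FactorsThrough ψ.conductor := by
          refine ⟨dvd_trans (conductor_dvd_level ψ) hed, (factorsThrough_conductor ψ).χ₀, ?_⟩
          conv_lhs => rw [hψ, (factorsThrough_conductor ψ).eq_changeLevel]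
          rw [← changeLevel_trans]
        exact Nat.sInf_le this
      have h2 : ψ.conductor ≤ e := Nat.le_of_dvd (Nat.pos_of_ne_zero (NeZero.ne e))
        (conductor_dvd_level ψ)
      rw [hχ] at hcc
      exact le_antisymm h2 hcc
    · exact hψ.symm
  · intro ψ hψ
    exact (hF e hed ψ).symm

lemma isUnit_intCast_of_dvd {q d : ℕ} (hd : d ∣ q) {a : ℤ} (ha : IsUnit ((a : ZMod q))) :
    IsUnit ((a : ZMod d)) := by
  have := ha.map (ZMod.castHom hd (ZMod d))
  rwa [map_intCast] at this

lemma sum_all_chars_eq (d : ℕ) [NeZero d] (a b : ℤ)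
    (ha : IsUnit ((a : ZMod d))) (hb : IsUnit ((b : ZMod d))) :
    ∑ χ : DirichletCharacter ℂ d, (χ ((b : ZMod d)))⁻¹ * χ ((a : ZMod d))
      = if (d : ℤ) ∣ a - b then (d.totient : ℂ) else 0 := by
  have key := DirichletCharacter.sum_char_inv_mul_char_eq ℂ (n := d) hb ((a : ZMod d))
  have hinv : ∀ χ : DirichletCharacter ℂ d, χ (((b : ZMod d))⁻¹) = (χ ((b : ZMod d)))⁻¹ := by
    intro χ
    refine eq_inv_of_mul_eq_one_left ?_
    rw [← map_mul, ZMod.inv_mul_of_unit _ hb, map_one]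
  simp only [hinv] at key
  rw [key]
  have hiff : ((b : ZMod d) = (a : ZMod d)) ↔ ((d : ℤ) ∣ a - b) := by
    rw [ZMod.intCast_eq_intCast_iff, Int.modEq_iff_dvd]
  simp only [hiff]

lemma sum_primitive_eq (q : ℕ) [NeZero q] (a b : ℤ)
    (ha : IsUnit ((a : ZMod q))) (hb : IsUnit ((b : ZMod q))) :
    ∑ χ : DirichletCharacter ℂ q,
        (if χ.IsPrimitive then (χ ((b : ZMod q)))⁻¹ * χ ((a : ZMod q)) else 0)
      = ∑ r ∈ q.divisors,
          (if (r : ℤ) ∣ a - b then 1 else 0) * (moebius (q / r) : ℂ) * (r.totient : ℂ) := by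
  have hq : q ≠ 0 := NeZero.ne q
  set f : ℕ → ℂ := fun e =>
    ∑ χ : DirichletCharacter ℂ e,
      (if χ.IsPrimitive then (χ ((b : ZMod e)))⁻¹ * χ ((a : ZMod e)) else 0) with hf
  set g : ℕ → ℂ := fun d => if (d : ℤ) ∣ a - b then (d.totient : ℂ) else 0 with hg
  have hs : ∀ x y : ℕ, x ∣ y → y ∈ {d : ℕ | d ∣ q} → x ∈ {d : ℕ | d ∣ q} :=
    fun x y hxy hy => dvd_trans hxy hy
  have step : ∀ d > 0, d ∈ {d : ℕ | d ∣ q} → ∑ i ∈ d.divisors, f i = g d := by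
    intro d hd0 hdq
    simp only [Set.mem_setOf_eq] at hdq
    haveI : NeZero d := ⟨hd0.ne'⟩
    have ha' := isUnit_intCast_of_dvd hdq ha
    have hb' := isUnit_intCast_of_dvd hdq hb
    have hF : ∀ (e : ℕ) (he : e ∣ d) (ψ : DirichletCharacter ℂ e),
        ((changeLevel he ψ) ((b : ZMod d)))⁻¹ * (changeLevel he ψ) ((a : ZMod d))
          = (ψ ((b : ZMod e)))⁻¹ * ψ ((a : ZMod e)) := by
      intro e he ψ
      rw [changeLevel_intCast he ψ a ha', changeLevel_intCast he ψ b hb']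
    calc ∑ i ∈ d.divisors, f i
        = ∑ χ : DirichletCharacter ℂ d, (χ ((b : ZMod d)))⁻¹ * χ ((a : ZMod d)) := by
          rw [sum_all_eq_sum_primitive d
            (fun e χ => (χ ((b : ZMod e)))⁻¹ * χ ((a : ZMod e))) hF]
      _ = g d := sum_all_chars_eq d a b ha' hb'
  have inv := (sum_eq_iff_sum_mul_moebius_eq_on {d : ℕ | d ∣ q} hs).mp step q
    (Nat.pos_of_ne_zero hq) (dvd_refl q)
  rw [show (∑ x ∈ q.divisorsAntidiagonal, ((moebius x.1 : ℂ) * g x.2))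
      = ∑ r ∈ q.divisors, (moebius (q / r) : ℂ) * g r from
    Nat.sum_divisorsAntidiagonal' (f := fun x y => (moebius x : ℂ) * g y)] at inv
  refine Eq.trans (Eq.symm inv) (Finset.sum_congr rfl fun r hr => ?_)
  rw [hg]
  by_cases hP : (r : ℤ) ∣ a - b <;> simp [hP]

/-- For integers `m, n` coprime to `q`, the sum over all primitive *even* Dirichlet characters
`χ` mod `q` of `χ(m) * conj(χ(n))` equals one half of the sum over factorizations `q = d·r`
with `r ∣ m - n` or `r ∣ m + n` (counted with multiplicity) of `μ(d) φ(r)`. -/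
theorem sum_primitive_even_char_orthogonality (q : ℕ) [NeZero q] (m n : ℕ)
    (h : Nat.Coprime (m * n) q) :
    ∑ᶠ χ : DirichletCharacter ℂ q,
        (if χ.IsPrimitive ∧ χ.Even
          then χ (m : ZMod q) * (starRingEnd ℂ) (χ (n : ZMod q)) else 0)
      = (1 / 2) * ∑ r ∈ q.divisors,
          (((if (r : ℤ) ∣ (m : ℤ) - (n : ℤ) then 1 else 0)
              + (if (r : ℤ) ∣ (m : ℤ) + (n : ℤ) then 1 else 0))
            * (moebius (q / r) : ℂ) * (Nat.totient r : ℂ)) := by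
  have hq : q ≠ 0 := NeZero.ne q
  have hm : Nat.Coprime m q := Nat.Coprime.coprime_dvd_left (dvd_mul_right m n) h
  have hn : Nat.Coprime n q := Nat.Coprime.coprime_dvd_left (dvd_mul_left n m) h
  have hmu : IsUnit ((m : ZMod q)) := (ZMod.isUnit_iff_coprime m q).mpr hm
  have hnu : IsUnit ((n : ZMod q)) := (ZMod.isUnit_iff_coprime n q).mpr hn
  have hmu' : IsUnit (((m : ℤ) : ZMod q)) := by rwa [Int.cast_natCast]
  have hnu' : IsUnit (((n : ℤ) : ZMod q)) := by rwa [Int.cast_natCast]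
  set a2 : ℤ := -(m : ℤ) with ha2
  have hcast3 : ((a2 : ZMod q)) = -((m : ℕ) : ZMod q) := by rw [ha2]; push_cast; ring
  have hmu'' : IsUnit ((a2 : ZMod q)) := by rw [hcast3]; exact hmu.neg
  rw [finsum_eq_sum_of_fintype]
  have key : ∀ χ : DirichletCharacter ℂ q,
      (if χ.IsPrimitive ∧ χ.Even then χ (m : ZMod q) * (starRingEnd ℂ) (χ (n : ZMod q)) else 0)
      = (1/2 : ℂ) * ((if χ.IsPrimitive then (χ (((n : ℤ)) : ZMod q))⁻¹ * χ (((m : ℤ)) : ZMod q) else 0)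
          + (if χ.IsPrimitive then (χ (((n : ℤ)) : ZMod q))⁻¹ * χ ((a2 : ZMod q)) else 0)) := by
    intro χ
    have hconj : (starRingEnd ℂ) (χ (n : ZMod q)) = (χ (n : ZMod q))⁻¹ := by
      have h1 := MulChar.star_apply' χ ((n : ZMod q))
      rw [MulChar.inv_apply_eq_inv'] at h1
      exact h1
    have hcast1 : (((m : ℤ)) : ZMod q) = ((m : ℕ) : ZMod q) := by push_cast; rfl
    have hcast2 : (((n : ℤ)) : ZMod q) = ((n : ℕ) : ZMod q) := by push_cast; rfl
    rw [hcast1, hcast2, hcast3]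
    by_cases hp : χ.IsPrimitive
    · rcases χ.even_or_odd with hev | hod
      · rw [if_pos ⟨hp, hev⟩, if_pos hp, if_pos hp, hconj]
        have hneg : χ (-((m : ℕ) : ZMod q)) = χ (((m : ℕ) : ZMod q)) := by
          rw [show -((m : ℕ) : ZMod q) = (-1) * ((m : ℕ) : ZMod q) by ring, map_mul, hev, one_mul]
        rw [hneg]; ring
      · have hne : ¬ χ.Even := by
          intro hev
          rw [DirichletCharacter.Even] at hev
          rw [DirichletCharacter.Odd, hev] at hod
          norm_num at hod
        rw [if_neg (fun hc => hne hc.2), if_pos hp, if_pos hp]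
        have hneg : χ (-((m : ℕ) : ZMod q)) = -χ (((m : ℕ) : ZMod q)) := by
          rw [show -((m : ℕ) : ZMod q) = (-1) * ((m : ℕ) : ZMod q) by ring, map_mul, hod]; ring
        rw [hneg]; ring
    · rw [if_neg (fun hc => hp hc.1), if_neg hp, if_neg hp]; ring
  rw [Finset.sum_congr rfl (fun χ _ => key χ), ← Finset.mul_sum, Finset.sum_add_distrib,
    sum_primitive_eq q ((m : ℤ)) ((n : ℤ)) hmu' hnu',
    sum_primitive_eq q a2 ((n : ℤ)) hmu'' hnu', ← Finset.sum_add_distrib]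
  congr 1
  refine Finset.sum_congr rfl fun r hr => ?_
  have hiff : ((r : ℤ) ∣ a2 - (n : ℤ)) ↔ ((r : ℤ) ∣ (m : ℤ) + (n : ℤ)) := by
    rw [ha2]
    rw [show -(m:ℤ) - (n:ℤ) = -((m:ℤ) + (n:ℤ)) by ring, dvd_neg]
  simp only [hiff]
  ring
end

section
/- Let τ₄(n) denote the number of ways to write n as an ordered product of 4 positive integers. For a prime p and complex s with Re(s) > 1/2, the sum over r ≥ 0 of τ₄(p^r)²/p^{2rs} equals (1 − p^{−2s})^{−7}·(1 + 9·p^{−2s} + 9·p^{−4s} + p^{−6s}). -/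
open Finset

/-- `τ₄ n` is the number of ways to write `n` as an ordered product of 4 positive integers. -/
def tau4 (n : ℕ) : ℕ :=
  (((Finset.Icc 1 n ×ˢ Finset.Icc 1 n) ×ˢ (Finset.Icc 1 n ×ˢ Finset.Icc 1 n)).filter
    (fun t => t.1.1 * t.1.2 * t.2.1 * t.2.2 = n)).card


open Nat in
lemma choose3_mul (a : ℕ) : (a+3).choose 3 * 6 = (a+1)*(a+2)*(a+3) := by
  have h := Nat.add_choose_mul_factorial_mul_factorial a 3
  apply Nat.eq_of_mul_eq_mul_right (Nat.factorial_pos a)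
  calc (a+3).choose 3 * 6 * a ! = (a+3).choose 3 * a ! * 3! := by simp [Nat.factorial]; ring
    _ = (a+3)! := h
    _ = (a+1)*(a+2)*(a+3) * a ! := by simp [Nat.factorial_succ]; ring

open Nat in
lemma choose6_mul (a : ℕ) : (a+6).choose 6 * 720 = (a+1)*(a+2)*(a+3)*(a+4)*(a+5)*(a+6) := by
  have h := Nat.add_choose_mul_factorial_mul_factorial a 6
  apply Nat.eq_of_mul_eq_mul_right (Nat.factorial_pos a)
  calc (a+6).choose 6 * 720 * a ! = (a+6).choose 6 * a ! * 6! := by simp [Nat.factorial]; ring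
    _ = (a+6)! := h
    _ = (a+1)*(a+2)*(a+3)*(a+4)*(a+5)*(a+6) * a ! := by simp [Nat.factorial_succ]; ring

lemma key_choose (r : ℕ) : ((r+3).choose 3)^2
    = (r+6).choose 6 + 9*(r+5).choose 6 + 9*(r+4).choose 6 + (r+3).choose 6 := by
  match r with
  | 0 => decide
  | 1 => decide
  | 2 => decide
  | (m+3) =>
    have h3 := choose3_mul (m+3)
    have h0 := choose6_mul m
    have h1 := choose6_mul (m+1)
    have h2 := choose6_mul (m+2)
    have h6 := choose6_mul (m+3)
    apply Nat.eq_of_mul_eq_mul_right (show 0 < 720 by norm_num)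
    have expand : ((m+3+3).choose 3)^2 * 720 = 20 * ((m+3+3).choose 3 * 6)^2 := by ring
    have hr : ((m+3+6).choose 6 + 9*(m+3+5).choose 6 + 9*(m+3+4).choose 6 + (m+3+3).choose 6) * 720
        = (m+3+6).choose 6 * 720 + 9*((m+2+6).choose 6 * 720) + 9*((m+1+6).choose 6 * 720)
          + (m+6).choose 6 * 720 := by ring_nf
    rw [expand, h3, hr, h6, h2, h1, h0]
    ring

lemma tau4_prime_pow {p : ℕ} (hp : p.Prime) (r : ℕ) : tau4 (p ^ r) = (r+3).choose 3 := by
  classical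
  set n := p ^ r with hn
  set E : Finset ((ℕ × ℕ) × ℕ × ℕ) :=
    ((Finset.range (r+1) ×ˢ Finset.range (r+1)) ×ˢ (Finset.range (r+1) ×ˢ Finset.range (r+1))).filter
      (fun q => q.1.1 + q.1.2 + q.2.1 + q.2.2 = r) with hE
  have hmemE : ∀ q : (ℕ × ℕ) × ℕ × ℕ, q ∈ E ↔ q.1.1 + q.1.2 + q.2.1 + q.2.2 = r := by
    intro q
    simp only [hE, Finset.mem_filter, Finset.mem_product, Finset.mem_range]
    constructor
    · rintro ⟨_, h⟩; exact h
    · intro h; refine ⟨⟨⟨?_, ?_⟩, ?_, ?_⟩, h⟩ <;> omega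
  -- Step A : tau4 (p^r) = E.card
  have hA : E.card = tau4 n := by
    apply Finset.card_bij (fun q _ => ((p ^ q.1.1, p ^ q.1.2), (p ^ q.2.1, p ^ q.2.2)))
    · intro q hq
      rw [hmemE] at hq
      have h1 : ∀ i : ℕ, i ≤ r → p ^ i ∈ Finset.Icc 1 n := by
        intro i hi
        rw [Finset.mem_Icc]
        exact ⟨Nat.one_le_pow _ _ hp.pos, Nat.pow_le_pow_right hp.one_le hi⟩
      simp only [Finset.mem_filter, Finset.mem_product]
      refine ⟨⟨⟨h1 _ (by omega), h1 _ (by omega)⟩, h1 _ (by omega), h1 _ (by omega)⟩, ?_⟩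
      simp only [← pow_add, hn, hq]
    · intro q hq q' hq' h
      have hinj := Nat.pow_right_injective hp.two_le
      simp only [Prod.mk.injEq] at h
      obtain ⟨⟨h1, h2⟩, h3, h4⟩ := h
      ext <;> [exact hinj h1; exact hinj h2; exact hinj h3; exact hinj h4]
    · intro t ht
      simp only [Finset.mem_filter] at ht
      obtain ⟨-, hprod⟩ := ht
      obtain ⟨⟨a, b⟩, ⟨c, d⟩⟩ := t
      simp only at hprod
      have ha : a ∣ p ^ r := ⟨b * c * d, by rw [show p ^ r = n from rfl, ← hprod]; ring⟩
      have hb : b ∣ p ^ r := ⟨a * c * d, by rw [show p ^ r = n from rfl, ← hprod]; ring⟩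
      have hc : c ∣ p ^ r := ⟨a * b * d, by rw [show p ^ r = n from rfl, ← hprod]; ring⟩
      have hd : d ∣ p ^ r := ⟨a * b * c, by rw [show p ^ r = n from rfl, ← hprod]; ring⟩
      obtain ⟨i, hi, rfl⟩ := (Nat.dvd_prime_pow hp).mp ha
      obtain ⟨j, hj, rfl⟩ := (Nat.dvd_prime_pow hp).mp hb
      obtain ⟨k, hk, rfl⟩ := (Nat.dvd_prime_pow hp).mp hc
      obtain ⟨l, hl, rfl⟩ := (Nat.dvd_prime_pow hp).mp hd
      refine ⟨((i, j), (k, l)), ?_, rfl⟩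
      rw [hmemE]
      simp only [← pow_add, hn] at hprod
      exact Nat.pow_right_injective hp.two_le hprod
  -- Step B : E.card = (r+3).choose 3
  have hB : E.card = (r+3).choose 3 := by
    have e1 : {q // q ∈ E} ≃ {f : Fin 4 → ℕ // ∑ i, f i = r} :=
      { toFun := fun q => ⟨![q.1.1.1, q.1.1.2, q.1.2.1, q.1.2.2], by
          have := (hmemE q.1).mp q.2
          simp [Fin.sum_univ_four]; omega⟩
        invFun := fun f => ⟨((f.1 0, f.1 1), (f.1 2, f.1 3)), by
          rw [hmemE]
          have := f.2
          simp only [Fin.sum_univ_four] at this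
          dsimp only
          omega⟩
        left_inv := fun q => by ext <;> simp
        right_inv := fun f => by
          ext i
          fin_cases i <;> simp }
    have e2 := (Sym.equivNatSumOfFintype (Fin 4) r).symm
    have : E.card = Fintype.card (Sym (Fin 4) r) := by
      rw [← Fintype.card_coe, Fintype.card_congr (e1.trans e2)]
    rw [this, Sym.card_sym_eq_choose]
    simp only [Fintype.card_fin]
    have : 4 + r - 1 = r + 3 := by omega
    rw [this, ← Nat.choose_symm (by omega : r ≤ r + 3)]
    congr 1
    omega
  rw [← hA, hB]

lemma shifted_hasSum {x : ℂ} (hx : ‖x‖ < 1) (j : ℕ) (hj : j ≤ 6) :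
    HasSum (fun n : ℕ => (((n + (6 - j)).choose 6 : ℕ) : ℂ) * x ^ n) (x ^ j / (1 - x) ^ 7) := by
  have h6 := hasSum_choose_mul_geometric_of_norm_lt_one (𝕜 := ℂ) 6 hx
  have key : HasSum (fun n : ℕ => (((n + j + (6 - j)).choose 6 : ℕ) : ℂ) * x ^ (n + j))
      (x ^ j * (1 / (1 - x) ^ (6 + 1))) := by
    have := h6.mul_left (x ^ j)
    convert this using 2 with n
    · rfl
    have : n + j + (6 - j) = n + 6 := by omega
    rw [this, pow_add]
    ring
  have := (hasSum_nat_add_iff (f := fun n : ℕ => (((n + (6 - j)).choose 6 : ℕ) : ℂ) * x ^ n) j).mp key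
  have hz : ∑ i ∈ Finset.range j, (((i + (6 - j)).choose 6 : ℕ) : ℂ) * x ^ i = 0 := by
    apply Finset.sum_eq_zero
    intro i hi
    rw [Finset.mem_range] at hi
    have : (i + (6 - j)).choose 6 = 0 := Nat.choose_eq_zero_of_lt (by omega)
    simp [this]
  rw [hz, add_zero] at this
  convert this using 1
  · rfl
  ring

/-- For a prime `p` and `Re(s) > 1/2`,
`∑_{r ≥ 0} τ₄(p^r)² / p^{2rs} = (1 - p^{-2s})^{-7} (1 + 9 p^{-2s} + 9 p^{-4s} + p^{-6s})`. -/
theorem tsum_tau4_sq_prime_pow (p : ℕ) (hp : p.Prime) (s : ℂ) (hs : 1 / 2 < s.re) :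
    ∑' r : ℕ, (tau4 (p ^ r) : ℂ) ^ 2 / (p : ℂ) ^ (2 * (r : ℂ) * s)
      = ((1 - (p : ℂ) ^ (-2 * s)) ^ 7)⁻¹
          * (1 + 9 * (p : ℂ) ^ (-2 * s) + 9 * (p : ℂ) ^ (-4 * s) + (p : ℂ) ^ (-6 * s)) := by
  set x : ℂ := (p : ℂ) ^ (-2 * s) with hxdef
  have hx : ‖x‖ < 1 := by
    rw [hxdef, Complex.norm_natCast_cpow_of_pos hp.pos]
    apply Real.rpow_lt_one_of_one_lt_of_neg
    · exact_mod_cast hp.one_lt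
    · simp only [neg_mul, Complex.neg_re, Complex.mul_re, Complex.ofReal_re]
      norm_num
      linarith
  -- summand rewrite
  have hsummand : ∀ r : ℕ, (tau4 (p ^ r) : ℂ) ^ 2 / (p : ℂ) ^ (2 * (r : ℂ) * s)
      = (((r+3).choose 3 : ℕ) : ℂ) ^ 2 * x ^ r := by
    intro r
    rw [tau4_prime_pow hp r]
    have h1 : (2 : ℂ) * (r : ℂ) * s = (r : ℕ) * (2 * s) := by ring
    have h2 : (p : ℂ) ^ (2 * (r : ℂ) * s) = ((p : ℂ) ^ (2 * s)) ^ r := by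
      rw [h1, Complex.cpow_nat_mul]
    have h3 : x = ((p : ℂ) ^ (2 * s))⁻¹ := by
      rw [hxdef, show (-2 : ℂ) * s = -(2 * s) by ring, Complex.cpow_neg]
    rw [h2, h3, div_eq_mul_inv, inv_pow]
  have h0 := hasSum_choose_mul_geometric_of_norm_lt_one (𝕜 := ℂ) 6 hx
  have h1 := shifted_hasSum hx 1 (by norm_num)
  have h2 := shifted_hasSum hx 2 (by norm_num)
  have h3 := shifted_hasSum hx 3 (by norm_num)
  have htot : HasSum (fun r : ℕ => (((r+3).choose 3 : ℕ) : ℂ) ^ 2 * x ^ r)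
      (1 / (1 - x) ^ (6 + 1) + (9 * (x ^ 1 / (1 - x) ^ 7)
        + (9 * (x ^ 2 / (1 - x) ^ 7) + x ^ 3 / (1 - x) ^ 7))) := by
    have := h0.add ((h1.mul_left 9).add ((h2.mul_left 9).add h3))
    convert this using 2 with r
    · rfl
    have hk := key_choose r
    have : (((r+3).choose 3 : ℕ) : ℂ) ^ 2
        = ((r+6).choose 6 : ℕ) + 9*(((r+5).choose 6 : ℕ) : ℂ) + 9*((r+4).choose 6 : ℕ)
          + ((r+3).choose 6 : ℕ) := by
      rw [← Nat.cast_pow]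
      rw [show (((r+3).choose 3)^2 : ℕ) = (r+6).choose 6 + 9*(r+5).choose 6 + 9*(r+4).choose 6
        + (r+3).choose 6 from hk]
      push_cast
      ring
    rw [this]
    norm_num
    ring
  rw [tsum_congr hsummand, htot.tsum_eq]
  have h4 : (p : ℂ) ^ (-4 * s) = x ^ 2 := by
    rw [hxdef, ← Complex.cpow_nat_mul]
    norm_num
    ring_nf
  have h6 : (p : ℂ) ^ (-6 * s) = x ^ 3 := by
    rw [hxdef, ← Complex.cpow_nat_mul]
    norm_num
    ring_nf
  rw [h4, h6]
  ring
end

section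
/- Let q ≥ 1, y > 0, k ≥ 1 a natural number with y^k ≤ φ(q)/log q, and let a : primes → ℂ. Then the sum over all Dirichlet characters χ mod q of |∑_{p ≤ y, p prime} a(p)χ(p)/√p|^{2k} is at most an absolute constant times φ(q)·k!·(∑_{p ≤ y} |a(p)|²/p)^k. -/
open Finset
open scoped Classical

set_option maxHeartbeats 1000000

private lemma aux_perm' {k : ℕ} {f g : Fin k → ℕ} (hf : ∀ i, Nat.Prime (f i))
    (hg : ∀ i, Nat.Prime (g i)) (h : ∏ i, f i = ∏ i, g i) :
    (List.ofFn f).Perm (List.ofFn g) := by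
  rw [← Multiset.coe_eq_coe, ← Multiset.rel_eq]
  have H := prime_factors_unique (f := (List.ofFn f : Multiset ℕ)) (g := (List.ofFn g : Multiset ℕ))
    (fun x hx => ?_) (fun x hx => ?_) ?_
  · exact H.mono fun a _ b _ hab => associated_iff_eq.mp hab
  · obtain ⟨i, rfl⟩ := List.mem_ofFn.mp (Multiset.mem_coe.mp hx)
    exact (hf i).prime
  · obtain ⟨i, rfl⟩ := List.mem_ofFn.mp (Multiset.mem_coe.mp hx)
    exact (hg i).prime
  · rw [Multiset.prod_coe, Multiset.prod_coe, List.prod_ofFn, List.prod_ofFn, h]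
    exact Associated.refl _

private lemma aux_card' {k : ℕ} (T : Finset (Fin k → ℕ)) (hT : ∀ f ∈ T, ∀ i, Nat.Prime (f i))
    {f : Fin k → ℕ} (hf : ∀ i, Nat.Prime (f i)) :
    (T.filter fun g => ∏ i, g i = ∏ i, f i).card ≤ k.factorial := by
  classical
  have h1 : (T.filter fun g => ∏ i, g i = ∏ i, f i).card ≤
      (List.ofFn f).permutations.toFinset.card := by
    apply Finset.card_le_card_of_injOn (fun g => List.ofFn g)
    · intro g hg
      rw [Finset.mem_coe, Finset.mem_filter] at hg
      exact List.mem_toFinset.mpr (List.mem_permutations.mpr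
        (aux_perm' (hT g hg.1) hf hg.2))
    · intro g _ g' _ hgg'
      exact List.ofFn_injective hgg'
  refine h1.trans ((List.toFinset_card_le _).trans ?_)
  rw [List.length_permutations, List.length_ofFn]

private lemma aux_ortho' (q : ℕ) [NeZero q] (u v : ZMod q) :
    (∑ χ : DirichletCharacter ℂ q, χ u * (starRingEnd ℂ) (χ v)) =
      if u = v ∧ IsUnit v then (q.totient : ℂ) else 0 := by
  classical
  have hexp : NeZero ((Monoid.exponent (ZMod q)ˣ : ℕ) : ℂ) :=
    ⟨Nat.cast_ne_zero.mpr Monoid.exponent_ne_zero_of_finite⟩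
  by_cases hv : IsUnit v
  · have hconj : ∀ χ : DirichletCharacter ℂ q, (starRingEnd ℂ) (χ v) = χ v⁻¹ := by
      intro χ
      have h1 : χ v * χ v⁻¹ = 1 := by
        rw [← map_mul, ZMod.mul_inv_of_unit _ hv, map_one]
      have h2 : χ v * (starRingEnd ℂ) (χ v) = 1 := by
        rw [Complex.mul_conj]
        norm_cast
        rw [Complex.normSq_eq_norm_sq]
        have := χ.unit_norm_eq_one hv.unit
        rw [hv.unit_spec] at this
        rw [this]; norm_num
      have hne : χ v ≠ 0 := by
        intro h0; rw [h0, zero_mul] at h1; exact zero_ne_one h1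
      exact mul_left_cancel₀ hne (h2.trans h1.symm)
    calc (∑ χ : DirichletCharacter ℂ q, χ u * (starRingEnd ℂ) (χ v))
        = ∑ χ : DirichletCharacter ℂ q, χ v⁻¹ * χ u := by
          refine Finset.sum_congr rfl fun χ _ => ?_
          rw [hconj χ, mul_comm]
      _ = if v = u then (q.totient : ℂ) else 0 :=
          DirichletCharacter.sum_char_inv_mul_char_eq ℂ hv u
      _ = if u = v ∧ IsUnit v then (q.totient : ℂ) else 0 := by
          by_cases huv : u = v
          · simp [huv, hv]
          · simp [huv, Ne.symm huv]
  · have h0 : ∀ χ : DirichletCharacter ℂ q, χ v = 0 := fun χ => χ.map_nonunit hv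
    simp [h0, hv]

private lemma aux_step1' (q k : ℕ) [NeZero q] (P : Finset ℕ) (a : ℕ → ℂ)
    (χ : DirichletCharacter ℂ q) :
    (∑ p ∈ P, a p * χ (p : ZMod q) / (Real.sqrt p : ℂ)) ^ k =
      ∑ f ∈ Fintype.piFinset (fun _ : Fin k => P),
        (∏ i, (a (f i) / (Real.sqrt (f i) : ℂ))) * χ (((∏ i, f i : ℕ) : ZMod q)) := by
  classical
  have h1 : (∑ p ∈ P, a p * χ (p : ZMod q) / (Real.sqrt p : ℂ)) ^ k =
      ∏ _i : Fin k, ∑ p ∈ P, a p * χ (p : ZMod q) / (Real.sqrt p : ℂ) := by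
    rw [Finset.prod_const, Finset.card_univ, Fintype.card_fin]
  rw [h1, Finset.prod_univ_sum]
  refine Finset.sum_congr rfl fun f _ => ?_
  calc ∏ i, (a (f i) * χ ((f i : ZMod q)) / (Real.sqrt (f i) : ℂ))
      = ∏ i, ((a (f i) / (Real.sqrt (f i) : ℂ)) * χ ((f i : ZMod q))) := by
        refine Finset.prod_congr rfl fun i _ => ?_
        rw [mul_div_right_comm]
    _ = (∏ i, (a (f i) / (Real.sqrt (f i) : ℂ))) * ∏ i, χ ((f i : ZMod q)) := by
        rw [Finset.prod_mul_distrib]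
    _ = (∏ i, (a (f i) / (Real.sqrt (f i) : ℂ))) * χ (((∏ i, f i : ℕ) : ZMod q)) := by
        rw [← map_prod χ]
        push_cast
        rfl

private lemma aux_step2' (q k : ℕ) [NeZero q] (Sf : DirichletCharacter ℂ q → ℂ) :
    (∑ᶠ χ : DirichletCharacter ℂ q, ‖Sf χ‖ ^ (2 * k)) =
      (∑ χ : DirichletCharacter ℂ q, Sf χ ^ k * (starRingEnd ℂ) (Sf χ ^ k)).re := by
  have hterm : ∀ χ : DirichletCharacter ℂ q,
      Sf χ ^ k * (starRingEnd ℂ) (Sf χ ^ k) = ((‖Sf χ‖ ^ (2 * k) : ℝ) : ℂ) := by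
    intro χ
    rw [Complex.mul_conj, Complex.normSq_eq_norm_sq, norm_pow, ← pow_mul,
      mul_comm k 2]
  rw [finsum_eq_sum_of_fintype]
  rw [Finset.sum_congr rfl fun χ _ => hterm χ, ← Complex.ofReal_sum, Complex.ofReal_re]

private lemma aux_step3' (q k : ℕ) [NeZero q]
    (Sf : DirichletCharacter ℂ q → ℂ)
    (T : Finset (Fin k → ℕ)) (w : (Fin k → ℕ) → ℂ) (N : (Fin k → ℕ) → ZMod q)
    (step1 : ∀ χ : DirichletCharacter ℂ q, Sf χ ^ k = ∑ f ∈ T, w f * χ (N f)) :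
    (∑ χ : DirichletCharacter ℂ q, Sf χ ^ k * (starRingEnd ℂ) (Sf χ ^ k)) =
      ∑ f ∈ T, ∑ g ∈ T, (w f * (starRingEnd ℂ) (w g)) *
        (if N f = N g ∧ IsUnit (N g) then (q.totient : ℂ) else 0) := by
  calc (∑ χ : DirichletCharacter ℂ q, Sf χ ^ k * (starRingEnd ℂ) (Sf χ ^ k))
      = ∑ χ : DirichletCharacter ℂ q, ∑ f ∈ T, ∑ g ∈ T,
          (w f * (starRingEnd ℂ) (w g)) * (χ (N f) * (starRingEnd ℂ) (χ (N g))) := by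
        refine Finset.sum_congr rfl fun χ _ => ?_
        rw [step1 χ, map_sum, Finset.sum_mul_sum]
        refine Finset.sum_congr rfl fun f _ => Finset.sum_congr rfl fun g _ => ?_
        rw [map_mul]
        ring
    _ = ∑ f ∈ T, ∑ g ∈ T, (w f * (starRingEnd ℂ) (w g)) *
          ∑ χ : DirichletCharacter ℂ q, (χ (N f) * (starRingEnd ℂ) (χ (N g))) := by
        rw [Finset.sum_comm]
        refine Finset.sum_congr rfl fun f _ => ?_
        rw [Finset.sum_comm]
        refine Finset.sum_congr rfl fun g _ => ?_
        rw [Finset.mul_sum]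
    _ = ∑ f ∈ T, ∑ g ∈ T, (w f * (starRingEnd ℂ) (w g)) *
        (if N f = N g ∧ IsUnit (N g) then (q.totient : ℂ) else 0) := by
        refine Finset.sum_congr rfl fun f _ => Finset.sum_congr rfl fun g _ => ?_
        rw [aux_ortho' q (N f) (N g)]

private lemma aux_step4' (q : ℕ) (k : ℕ) (φR : ℝ) (hφ : 0 ≤ φR) (A : ℂ)
    (T : Finset (Fin k → ℕ)) (w : (Fin k → ℕ) → ℂ) (N : (Fin k → ℕ) → ZMod q)
    (himp : ∀ f ∈ T, ∀ g ∈ T, N f = N g → (∏ i, g i) = (∏ i, f i))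
    (step3 : A = ∑ f ∈ T, ∑ g ∈ T, (w f * (starRingEnd ℂ) (w g)) *
        (if N f = N g ∧ IsUnit (N g) then (φR : ℂ) else 0)) :
    A.re ≤ φR * ∑ f ∈ T, ∑ g ∈ T,
      (if (∏ i, g i) = (∏ i, f i) then ‖w f‖ * ‖w g‖ else 0) := by
  classical
  calc A.re ≤ ‖A‖ := Complex.re_le_norm A
    _ ≤ ∑ f ∈ T, ∑ g ∈ T, ‖(w f * (starRingEnd ℂ) (w g)) *
        (if N f = N g ∧ IsUnit (N g) then (φR : ℂ) else 0)‖ := by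
        rw [step3]
        exact (norm_sum_le _ _).trans (Finset.sum_le_sum fun f _ => norm_sum_le _ _)
    _ ≤ ∑ f ∈ T, ∑ g ∈ T, φR *
        (if (∏ i, g i) = (∏ i, f i) then ‖w f‖ * ‖w g‖ else 0) := by
        refine Finset.sum_le_sum fun f hf => Finset.sum_le_sum fun g hg => ?_
        by_cases hc : N f = N g ∧ IsUnit (N g)
        · rw [if_pos hc, if_pos (himp f hf g hg hc.1)]
          rw [norm_mul, norm_mul, RCLike.norm_conj, Complex.norm_real, Real.norm_eq_abs,
            abs_of_nonneg hφ]
          ring_nf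
          exact le_refl _
        · rw [if_neg hc, mul_zero, norm_zero]
          positivity
    _ = φR * ∑ f ∈ T, ∑ g ∈ T,
        (if (∏ i, g i) = (∏ i, f i) then ‖w f‖ * ‖w g‖ else 0) := by
        rw [Finset.mul_sum]
        exact Finset.sum_congr rfl fun f _ => by rw [Finset.mul_sum]

private lemma aux_step5' (k : ℕ) (S2 : ℝ) (T : Finset (Fin k → ℕ)) (w : (Fin k → ℕ) → ℂ)
    (W : (Fin k → ℕ) → ℝ) (hW : ∀ f, ‖w f‖ ^ 2 = W f) (hWnn : ∀ f, 0 ≤ W f)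
    (hcard : ∀ f ∈ T, (T.filter fun g => ∏ i, g i = ∏ i, f i).card ≤ k.factorial)
    (hsum : ∑ f ∈ T, W f = S2 ^ k) :
    (∑ f ∈ T, ∑ g ∈ T, (if (∏ i, g i) = (∏ i, f i) then ‖w f‖ * ‖w g‖ else 0))
      ≤ (k.factorial : ℝ) * S2 ^ k := by
  classical
  have hab : ∀ f g : Fin k → ℕ, ‖w f‖ * ‖w g‖ ≤ (W f + W g) / 2 := by
    intro f g
    have h1 := hW f; have h2 := hW g
    nlinarith [sq_nonneg (‖w f‖ - ‖w g‖), norm_nonneg (w f), norm_nonneg (w g)]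
  calc (∑ f ∈ T, ∑ g ∈ T, (if (∏ i, g i) = (∏ i, f i) then ‖w f‖ * ‖w g‖ else 0))
      ≤ ∑ f ∈ T, ∑ g ∈ T, (if (∏ i, g i) = (∏ i, f i) then (W f + W g) / 2 else 0) := by
        refine Finset.sum_le_sum fun f _ => Finset.sum_le_sum fun g _ => ?_
        by_cases hc : (∏ i, g i) = (∏ i, f i)
        · rw [if_pos hc, if_pos hc]; exact hab f g
        · rw [if_neg hc, if_neg hc]
    _ = ∑ f ∈ T, ∑ g ∈ T, (if (∏ i, g i) = (∏ i, f i) then W f else 0) := by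
        have hswap : (∑ f ∈ T, ∑ g ∈ T, (if (∏ i, g i) = (∏ i, f i) then W g else 0))
            = ∑ f ∈ T, ∑ g ∈ T, (if (∏ i, g i) = (∏ i, f i) then W f else 0) := by
          rw [Finset.sum_comm]
          refine Finset.sum_congr rfl fun f _ => Finset.sum_congr rfl fun g _ => ?_
          exact if_congr ⟨Eq.symm, Eq.symm⟩ rfl rfl
        have hsplit : ∀ f g : Fin k → ℕ,
            (if (∏ i, g i) = (∏ i, f i) then (W f + W g) / 2 else 0)
            = ((if (∏ i, g i) = (∏ i, f i) then W f else 0)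
              + (if (∏ i, g i) = (∏ i, f i) then W g else 0)) / 2 := by
          intro f g; by_cases hc : (∏ i, g i) = (∏ i, f i) <;> simp [hc]
        simp_rw [hsplit, ← Finset.sum_div, Finset.sum_add_distrib]
        rw [hswap, add_self_div_two]
    _ = ∑ f ∈ T, ((T.filter fun g => ∏ i, g i = ∏ i, f i).card : ℝ) * W f := by
        refine Finset.sum_congr rfl fun f _ => ?_
        rw [← Finset.sum_filter, Finset.sum_const, nsmul_eq_mul]
    _ ≤ ∑ f ∈ T, (k.factorial : ℝ) * W f := by
        refine Finset.sum_le_sum fun f hf => ?_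
        exact mul_le_mul_of_nonneg_right (by exact_mod_cast hcard f hf) (hWnn f)
    _ = (k.factorial : ℝ) * S2 ^ k := by rw [← Finset.mul_sum, hsum]

/-- There is an absolute constant `C` such that for any modulus `q`, any `y > 0` and `k ≥ 1`
with `y^k ≤ φ(q)/log q`, and any coefficients `a(p)`, the `2k`-th moment over all Dirichlet
characters mod `q` of the prime Dirichlet polynomial `∑_{p ≤ y} a(p)χ(p)/√p` is at most
`C · φ(q) · k! · (∑_{p ≤ y} |a(p)|²/p)^k`. -/
theorem char_sum_prime_poly_moment_bound :
    ∃ C : ℝ, 0 < C ∧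
      ∀ (q : ℕ) (_ : NeZero q) (y : ℝ) (_ : 0 < y) (k : ℕ) (_ : 1 ≤ k) (a : ℕ → ℂ),
        y ^ k ≤ (Nat.totient q : ℝ) / Real.log q →
        (∑ᶠ χ : DirichletCharacter ℂ q,
            ‖∑ p ∈ (Finset.range (Nat.floor y + 1)).filter Nat.Prime,
                a p * χ (p : ZMod q) / (Real.sqrt p : ℂ)‖ ^ (2 * k))
          ≤ C * (Nat.totient q : ℝ) * (Nat.factorial k : ℝ)
              * (∑ p ∈ (Finset.range (Nat.floor y + 1)).filter Nat.Prime,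
                  ‖a p‖ ^ 2 / (p : ℝ)) ^ k := by
  classical
  refine ⟨1, one_pos, ?_⟩
  intro q hq y hy k hk a hyk
  set P : Finset ℕ := (Finset.range (Nat.floor y + 1)).filter Nat.Prime with hPdef
  set S2 : ℝ := ∑ p ∈ P, ‖a p‖ ^ 2 / (p : ℝ) with hS2def
  -- rule out q = 1
  rcases Nat.lt_or_ge q 2 with hq1 | hq2
  · interval_cases q
    · exact absurd rfl (NeZero.ne 0)
    · exfalso
      simp only [Nat.totient_one, Nat.cast_one, Real.log_one, div_zero] at hyk
      exact absurd (lt_of_lt_of_le (pow_pos hy k) hyk) (lt_irrefl 0)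
  have hq1R : (1 : ℝ) < q := by exact_mod_cast hq2
  have hlogq : 0 < Real.log q := Real.log_pos hq1R
  -- y ^ k < q
  have hyq : y ^ k < (q : ℝ) := by
    refine lt_of_le_of_lt hyk ?_
    rw [div_lt_iff₀ hlogq]
    rcases eq_or_lt_of_le hq2 with h2 | h3
    · rw [← h2]
      norm_num
      have h4 : (1 : ℝ) < Real.log 4 := by
        rw [Real.lt_log_iff_exp_lt (by norm_num)]
        calc Real.exp 1 < 2.7182818286 := Real.exp_one_lt_d9
          _ < 4 := by norm_num
      have : Real.log 4 = 2 * Real.log 2 := by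
        rw [show (4 : ℝ) = 2 ^ 2 by norm_num, Real.log_pow]; push_cast; ring
      nlinarith
    · have hφ : (q.totient : ℝ) < q := by
        exact_mod_cast Nat.totient_lt q (by omega)
      have hlog1 : 1 ≤ Real.log q := by
        rw [Real.le_log_iff_exp_le (by positivity)]
        calc Real.exp 1 ≤ 2.7182818286 := Real.exp_one_lt_d9.le
          _ ≤ 3 := by norm_num
          _ ≤ (q : ℝ) := by exact_mod_cast h3
      nlinarith [Nat.cast_nonneg (α := ℝ) q.totient]
  set T : Finset (Fin k → ℕ) := Fintype.piFinset (fun _ : Fin k => P) with hTdef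
  have hTprime : ∀ f ∈ T, ∀ i, Nat.Prime (f i) := by
    intro f hf i
    have := (Fintype.mem_piFinset.mp hf) i
    exact (Finset.mem_filter.mp this).2
  have hTlt : ∀ f ∈ T, (∏ i, f i) < q := by
    intro f hf
    have hR : ((∏ i, f i : ℕ) : ℝ) < q := by
      push_cast
      calc (∏ i, (f i : ℝ)) ≤ ∏ _i : Fin k, y := by
            refine Finset.prod_le_prod (fun i _ => by positivity) (fun i _ => ?_)
            have := (Fintype.mem_piFinset.mp hf) i
            have h1 : f i ≤ Nat.floor y := by
              have := Finset.mem_range.mp (Finset.mem_filter.mp this).1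
              omega
            calc (f i : ℝ) ≤ (Nat.floor y : ℝ) := by exact_mod_cast h1
              _ ≤ y := Nat.floor_le hy.le
        _ = y ^ k := by rw [Finset.prod_const, Finset.card_univ, Fintype.card_fin]
        _ < q := hyq
    exact_mod_cast hR
  set w : (Fin k → ℕ) → ℂ := fun f => ∏ i, (a (f i) / (Real.sqrt (f i) : ℂ)) with hwdef
  set W : (Fin k → ℕ) → ℝ := fun f => ∏ i, (‖a (f i)‖ ^ 2 / (f i : ℝ)) with hWdef
  set N : (Fin k → ℕ) → ZMod q := fun f => (((∏ i, f i : ℕ) : ZMod q)) with hNdef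
  have hWnonneg : ∀ f : Fin k → ℕ, 0 ≤ W f := fun f =>
    Finset.prod_nonneg fun i _ => by positivity
  have hW : ∀ f : Fin k → ℕ, ‖w f‖ ^ 2 = W f := by
    intro f
    rw [hwdef, hWdef]
    simp only
    rw [norm_prod, ← Finset.prod_pow]
    refine Finset.prod_congr rfl fun i _ => ?_
    rw [norm_div, Complex.norm_real, Real.norm_eq_abs,
      abs_of_nonneg (Real.sqrt_nonneg _), div_pow, Real.sq_sqrt (Nat.cast_nonneg _)]
  set Sf : DirichletCharacter ℂ q → ℂ :=
    fun χ => ∑ p ∈ P, a p * χ (p : ZMod q) / (Real.sqrt p : ℂ) with hSfdef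
  have step1 : ∀ χ : DirichletCharacter ℂ q,
      Sf χ ^ k = ∑ f ∈ T, w f * χ (N f) := by
    intro χ
    rw [hSfdef, hwdef, hTdef, hNdef]
    exact aux_step1' q k P a χ
  set A : ℂ := ∑ χ : DirichletCharacter ℂ q, Sf χ ^ k * (starRingEnd ℂ) (Sf χ ^ k) with hAdef
  have step2 : (∑ᶠ χ : DirichletCharacter ℂ q, ‖Sf χ‖ ^ (2 * k)) = A.re := by
    rw [hAdef]
    exact aux_step2' q k Sf
  have himp : ∀ f ∈ T, ∀ g ∈ T, N f = N g → (∏ i, g i) = (∏ i, f i) := by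
    intro f hf g hg hN
    have hN' := congrArg ZMod.val hN
    rw [hNdef] at hN'
    simp only at hN'
    rw [ZMod.val_cast_of_lt (hTlt f hf), ZMod.val_cast_of_lt (hTlt g hg)] at hN'
    exact hN'.symm
  have step3 : A = ∑ f ∈ T, ∑ g ∈ T, (w f * (starRingEnd ℂ) (w g)) *
      (if N f = N g ∧ IsUnit (N g) then (q.totient : ℂ) else 0) := by
    rw [hAdef]
    exact aux_step3' q k Sf T w N step1
  have step4 : A.re ≤ (q.totient : ℝ) *
      ∑ f ∈ T, ∑ g ∈ T, (if (∏ i, g i) = (∏ i, f i) then ‖w f‖ * ‖w g‖ else 0) := by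
    refine aux_step4' q k (q.totient : ℝ) (Nat.cast_nonneg _) A T w N himp ?_
    rw [step3]
    norm_cast
    simp only [apply_ite (Nat.cast : ℕ → ℂ), Nat.cast_zero]
  have hcard : ∀ f ∈ T, (T.filter fun g => ∏ i, g i = ∏ i, f i).card ≤ k.factorial :=
    fun f hf => aux_card' T hTprime (hTprime f hf)
  have hsum : ∑ f ∈ T, W f = S2 ^ k := by
    rw [hTdef, hWdef, hS2def]
    calc ∑ f ∈ Fintype.piFinset (fun _ : Fin k => P), ∏ i, (‖a (f i)‖ ^ 2 / (f i : ℝ))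
        = ∏ _i : Fin k, ∑ p ∈ P, ‖a p‖ ^ 2 / (p : ℝ) :=
          (Finset.prod_univ_sum (fun _ : Fin k => P) (fun _ p => ‖a p‖ ^ 2 / (p : ℝ))).symm
      _ = (∑ p ∈ P, ‖a p‖ ^ 2 / (p : ℝ)) ^ k := by
          rw [Finset.prod_const, Finset.card_univ, Fintype.card_fin]
  have step5 := aux_step5' k S2 T w W hW hWnonneg hcard hsum
  calc (∑ᶠ χ : DirichletCharacter ℂ q, ‖Sf χ‖ ^ (2 * k)) = A.re := step2
    _ ≤ (q.totient : ℝ) * ∑ f ∈ T, ∑ g ∈ T,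
        (if (∏ i, g i) = (∏ i, f i) then ‖w f‖ * ‖w g‖ else 0) := step4
    _ ≤ (q.totient : ℝ) * ((k.factorial : ℝ) * S2 ^ k) :=
        mul_le_mul_of_nonneg_left step5 (Nat.cast_nonneg _)
    _ = 1 * (q.totient : ℝ) * (k.factorial : ℝ) * S2 ^ k := by ring
end

section
/- Let a_{k,y}(n) = ∑_{p₁⋯p_k = n, each p_i ≤ y prime} a(p₁)⋯a(p_k) be the coefficient of the k-th power of a prime Dirichlet polynomial. Then ∑_{n ≤ y^k} |a_{k,y}(n)|²/n ≤ k!·(∑_{p ≤ y} |a(p)|²/p)^k. -/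
open Finset

/-- Let `a_{k,y}(n) = ∑_{p₁⋯p_k = n, p_i ≤ y prime} a(p₁)⋯a(p_k)`.
Then `∑_{n ≤ y^k} |a_{k,y}(n)|²/n ≤ k! (∑_{p ≤ y} |a(p)|²/p)^k`. -/
theorem diagonal_coeff_sum_le (y : ℝ) (hy : 0 < y) (k : ℕ) (hk : 1 ≤ k) (a : ℕ → ℂ) :
    (∑ n ∈ Finset.Icc 1 (Nat.floor y ^ k),
        ‖∑ f ∈ (Fintype.piFinset fun _ : Fin k =>
              (Finset.range (Nat.floor y + 1)).filter Nat.Prime).filter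
            (fun f => ∏ i, f i = n),
          ∏ i, a (f i)‖ ^ 2 / (n : ℝ))
      ≤ (Nat.factorial k : ℝ)
          * (∑ p ∈ (Finset.range (Nat.floor y + 1)).filter Nat.Prime,
              ‖a p‖ ^ 2 / (p : ℝ)) ^ k := by
  set P : Finset ℕ := (Finset.range (Nat.floor y + 1)).filter Nat.Prime with hP
  set S : ℕ → Finset (Fin k → ℕ) := fun n =>
    (Fintype.piFinset fun _ : Fin k => P).filter (fun f => ∏ i, f i = n) with hS
  have hSmem : ∀ n, ∀ f ∈ S n, (∀ i, f i ∈ P) ∧ ∏ i, f i = n := by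
    intro n f hf
    simp only [hS, Finset.mem_filter, Fintype.mem_piFinset] at hf
    exact hf
  -- every tuple in `S n` is a permutation of the prime factor list of `n`
  have hperm : ∀ n, ∀ f ∈ S n, (List.ofFn f).Perm n.primeFactorsList := by
    intro n f hf
    obtain ⟨h1, h2⟩ := hSmem n f hf
    refine Nat.primeFactorsList_unique ?_ ?_
    · rw [List.prod_ofFn]; exact h2
    · intro p hp
      obtain ⟨i, rfl⟩ := List.mem_ofFn.mp hp
      exact (Finset.mem_filter.mp (h1 i)).2
  -- cardinality bound
  have hcard : ∀ n, (S n).card ≤ Nat.factorial k := by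
    intro n
    rcases (S n).eq_empty_or_nonempty with h | ⟨f₀, hf₀⟩
    · simp [h]
    · have hlen : n.primeFactorsList.length = k := by
        have := (hperm n f₀ hf₀).length_eq
        simpa using this.symm
      calc (S n).card ≤ (n.primeFactorsList.permutations).toFinset.card := by
            refine Finset.card_le_card_of_injOn (fun f => List.ofFn f)
              (fun f hf => List.mem_toFinset.mpr
                (List.mem_permutations.mpr (hperm n f hf))) ?_
            intro f _ g _ h
            exact List.ofFn_injective h
        _ ≤ (n.primeFactorsList.permutations).length := (n.primeFactorsList.permutations).toFinset_card_le
        _ = Nat.factorial k := by rw [List.length_permutations, hlen]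
  -- membership in P gives bounds
  have hPlb : ∀ p ∈ P, 1 ≤ p := fun p hp => (Finset.mem_filter.mp hp).2.one_lt.le
  have hPub : ∀ p ∈ P, p ≤ Nat.floor y :=
    fun p hp => Nat.lt_succ_iff.mp (Finset.mem_range.mp (Finset.mem_filter.mp hp).1)
  -- the key pointwise bound
  have key : ∀ n ∈ Finset.Icc 1 (Nat.floor y ^ k),
      ‖∑ f ∈ S n, ∏ i, a (f i)‖ ^ 2 / (n : ℝ)
        ≤ (Nat.factorial k : ℝ) * ∑ f ∈ S n, ∏ i, (‖a (f i)‖ ^ 2 / (f i : ℝ)) := by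
    intro n hn
    have hn1 : 1 ≤ n := (Finset.mem_Icc.mp hn).1
    have hnpos : (0:ℝ) < n := by exact_mod_cast hn1
    have h1 : ‖∑ f ∈ S n, ∏ i, a (f i)‖ ^ 2
        ≤ ((S n).card : ℝ) * ∑ f ∈ S n, ‖∏ i, a (f i)‖ ^ 2 := by
      calc ‖∑ f ∈ S n, ∏ i, a (f i)‖ ^ 2
          ≤ (∑ f ∈ S n, ‖∏ i, a (f i)‖) ^ 2 := by
            have := norm_sum_le (S n) (fun f => ∏ i, a (f i))
            exact pow_le_pow_left₀ (norm_nonneg _) this 2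
        _ ≤ ((S n).card : ℝ) * ∑ f ∈ S n, ‖∏ i, a (f i)‖ ^ 2 :=
            sq_sum_le_card_mul_sum_sq
    have h2 : (∑ f ∈ S n, ‖∏ i, a (f i)‖ ^ 2) / (n : ℝ)
        = ∑ f ∈ S n, ∏ i, (‖a (f i)‖ ^ 2 / (f i : ℝ)) := by
      rw [Finset.sum_div]
      refine Finset.sum_congr rfl fun f hf => ?_
      have hfn : ∏ i, f i = n := (hSmem n f hf).2
      rw [norm_prod, ← Finset.prod_pow, Finset.prod_div_distrib]
      congr 1
      rw [← hfn]
      push_cast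
      rfl
    have h3 : (0:ℝ) ≤ ∑ f ∈ S n, ‖∏ i, a (f i)‖ ^ 2 :=
      Finset.sum_nonneg fun f _ => sq_nonneg _
    calc ‖∑ f ∈ S n, ∏ i, a (f i)‖ ^ 2 / (n : ℝ)
        ≤ (((S n).card : ℝ) * ∑ f ∈ S n, ‖∏ i, a (f i)‖ ^ 2) / (n : ℝ) := by
          gcongr
      _ ≤ ((Nat.factorial k : ℝ) * ∑ f ∈ S n, ‖∏ i, a (f i)‖ ^ 2) / (n : ℝ) := by
          gcongr
          exact_mod_cast hcard n
      _ = (Nat.factorial k : ℝ) * ((∑ f ∈ S n, ‖∏ i, a (f i)‖ ^ 2) / (n : ℝ)) := by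
          ring
      _ = (Nat.factorial k : ℝ) * ∑ f ∈ S n, ∏ i, (‖a (f i)‖ ^ 2 / (f i : ℝ)) := by
          rw [h2]
  -- the map `f ↦ ∏ f i` sends tuples into the interval
  have hmaps : ∀ f ∈ Fintype.piFinset (fun _ : Fin k => P),
      ∏ i, f i ∈ Finset.Icc 1 (Nat.floor y ^ k) := by
    intro f hf
    rw [Fintype.mem_piFinset] at hf
    rw [Finset.mem_Icc]
    constructor
    · exact Finset.one_le_prod' fun i _ => hPlb _ (hf i)
    · calc ∏ i, f i ≤ Nat.floor y ^ (Finset.univ : Finset (Fin k)).card :=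
          Finset.prod_le_pow_card _ _ _ fun i _ => hPub _ (hf i)
        _ = Nat.floor y ^ k := by rw [Finset.card_univ, Fintype.card_fin]
  calc (∑ n ∈ Finset.Icc 1 (Nat.floor y ^ k), ‖∑ f ∈ S n, ∏ i, a (f i)‖ ^ 2 / (n : ℝ))
      ≤ ∑ n ∈ Finset.Icc 1 (Nat.floor y ^ k),
          (Nat.factorial k : ℝ) * ∑ f ∈ S n, ∏ i, (‖a (f i)‖ ^ 2 / (f i : ℝ)) :=
        Finset.sum_le_sum key
    _ = (Nat.factorial k : ℝ) * ∑ n ∈ Finset.Icc 1 (Nat.floor y ^ k),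
          ∑ f ∈ S n, ∏ i, (‖a (f i)‖ ^ 2 / (f i : ℝ)) := by rw [Finset.mul_sum]
    _ = (Nat.factorial k : ℝ) * ∑ f ∈ Fintype.piFinset (fun _ : Fin k => P),
          ∏ i, (‖a (f i)‖ ^ 2 / (f i : ℝ)) := by
        rw [Finset.sum_fiberwise_of_maps_to hmaps]
    _ = (Nat.factorial k : ℝ) * (∑ p ∈ P, ‖a p‖ ^ 2 / (p : ℝ)) ^ k := by
        rw [← Finset.prod_univ_sum (fun _ : Fin k => P) (fun _ p => ‖a p‖ ^ 2 / (p : ℝ)),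
          Finset.prod_const, Finset.card_univ, Fintype.card_fin]
end

section
/- The sum over pairs of positive integers m < n ≤ Q² of τ₄(m)τ(m)τ₄(n)τ(n)/(√(mn)·(n − m)) is O((log Q)^{65}) as Q → ∞. -/
open Finset Filter

/-- Finset of ordered factorizations of `m` indexed by `ι`. -/
def Dset (ι : Type) [Fintype ι] [DecidableEq ι] (m : ℕ) : Finset (ι → ℕ) :=
  (Fintype.piFinset fun _ : ι => Finset.Icc 1 m).filter fun f => ∏ i, f i = m

def D (ι : Type) [Fintype ι] [DecidableEq ι] (m : ℕ) : ℕ := (Dset ι m).card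

lemma mem_Dset {ι : Type} [Fintype ι] [DecidableEq ι] {m : ℕ} (hm : 1 ≤ m) {f : ι → ℕ} :
    f ∈ Dset ι m ↔ (∀ i, 1 ≤ f i) ∧ ∏ i, f i = m := by
  simp only [Dset, mem_filter, Fintype.mem_piFinset, mem_Icc]
  constructor
  · rintro ⟨h1, h2⟩; exact ⟨fun i => (h1 i).1, h2⟩
  · rintro ⟨h1, h2⟩
    refine ⟨fun i => ⟨h1 i, ?_⟩, h2⟩
    exact h2 ▸ Nat.le_of_dvd (h2 ▸ hm) (Finset.dvd_prod_of_mem f (mem_univ i))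

lemma D_equiv {ι κ : Type} [Fintype ι] [DecidableEq ι] [Fintype κ] [DecidableEq κ]
    (e : ι ≃ κ) (m : ℕ) (hm : 1 ≤ m) : D ι m = D κ m := by
  unfold D
  apply Finset.card_bij (fun f _ => f ∘ e.symm)
  · intro f hf
    rw [mem_Dset hm] at hf ⊢
    exact ⟨fun i => hf.1 _, by rw [← hf.2]; exact Equiv.prod_comp e.symm f⟩
  · intro f hf g hg h
    funext i
    have := congrFun h (e i)
    simpa using this
  · intro f hf
    refine ⟨f ∘ e, ?_, by funext i; simp⟩
    rw [mem_Dset hm] at hf ⊢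
    exact ⟨fun i => hf.1 _, by rw [← hf.2]; exact Equiv.prod_comp e f⟩


lemma tau4_eq_D {m : ℕ} (hm : 1 ≤ m) : tau4 m = D (Fin 4) m := by
  unfold tau4 D
  apply Finset.card_bij (fun t _ => ![t.1.1, t.1.2, t.2.1, t.2.2])
  · rintro ⟨⟨a, b⟩, c, d⟩ ht
    simp only [mem_filter, mem_product, mem_Icc] at ht
    rw [mem_Dset hm]
    constructor
    · intro i; fin_cases i <;> simp [ht.1.1.1.1, ht.1.1.2.1, ht.1.2.1.1, ht.1.2.2.1]
    · rw [Fin.prod_univ_four]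
      simpa [mul_assoc] using ht.2
  · rintro ⟨⟨a, b⟩, c, d⟩ h1 ⟨⟨a', b'⟩, c', d'⟩ h2 h
    have h0 := congrFun h 0
    have h1' := congrFun h 1
    have h2' := congrFun h 2
    have h3' := congrFun h 3
    simp [Matrix.cons_val_zero, Matrix.cons_val_one] at h0 h1' h2' h3'
    simp_all
  · intro f hf
    rw [mem_Dset hm] at hf
    obtain ⟨hpos, hprod⟩ := hf
    rw [Fin.prod_univ_four] at hprod
    refine ⟨((f 0, f 1), (f 2, f 3)), ?_, ?_⟩
    · have hle : ∀ i, f i ≤ m := fun i => Nat.le_of_dvd hm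
        (by rw [← Fin.prod_univ_four f] at hprod; exact hprod ▸ Finset.dvd_prod_of_mem f (Finset.mem_univ i))
      simp only [mem_filter, mem_product, mem_Icc]
      refine ⟨⟨⟨⟨hpos 0, hle 0⟩, hpos 1, hle 1⟩, ⟨hpos 2, hle 2⟩, hpos 3, hle 3⟩, ?_⟩
      simpa [mul_assoc] using hprod
    · funext i; fin_cases i <;> rfl

lemma tau_eq_D {m : ℕ} (hm : 1 ≤ m) : m.divisors.card = D (Fin 2) m := by
  unfold D
  apply Finset.card_bij (fun d _ => ![d, m / d])
  · intro d hd
    rw [Nat.mem_divisors] at hd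
    rw [mem_Dset hm]
    have hd1 : 1 ≤ d := Nat.pos_of_dvd_of_pos hd.1 hm
    have : d * (m / d) = m := Nat.mul_div_cancel' hd.1
    constructor
    · intro i; fin_cases i
      · simpa using hd1
      · show 1 ≤ m / d; exact Nat.div_pos (Nat.le_of_dvd hm hd.1) hd1
    · rw [Fin.prod_univ_two]; simpa using this
  · intro a ha b hb h
    simpa using congrFun h 0
  · intro f hf
    rw [mem_Dset hm] at hf
    obtain ⟨hpos, hprod⟩ := hf
    rw [Fin.prod_univ_two] at hprod
    refine ⟨f 0, ?_, ?_⟩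
    · rw [Nat.mem_divisors]
      exact ⟨⟨f 1, hprod.symm⟩, by omega⟩
    · funext i; fin_cases i
      · rfl
      · show m / f 0 = f 1
        rw [← hprod, Nat.mul_div_cancel_left _ (hpos 0)]



/-- `c ∣ a * p → c / gcd c a ∣ p` -/
lemma div_gcd_dvd_of_dvd_mul {a c p : ℕ} (ha : 1 ≤ a) (h : c ∣ a * p) :
    c / Nat.gcd c a ∣ p := by
  rcases Nat.eq_zero_or_pos c with rfl | hc
  · have hp : a = 0 ∨ p = 0 := Nat.mul_eq_zero.mp (Nat.eq_zero_of_zero_dvd h)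
    have : p = 0 := by omega
    simp [this]
  have hg : 0 < Nat.gcd c a := Nat.gcd_pos_of_pos_left a hc
  have h1 : Nat.gcd c a * (c / Nat.gcd c a) = c := Nat.mul_div_cancel' (Nat.gcd_dvd_left c a)
  have h2 : Nat.gcd c a * (a / Nat.gcd c a) = a := Nat.mul_div_cancel' (Nat.gcd_dvd_right c a)
  have key : Nat.gcd c a * (c / Nat.gcd c a) ∣ Nat.gcd c a * ((a / Nat.gcd c a) * p) := by
    rw [h1, ← mul_assoc, h2]; exact h
  exact (Nat.coprime_div_gcd_div_gcd hg).dvd_of_dvd_mul_left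
    ((mul_dvd_mul_iff_left hg.ne').mp key)

/-- Greedy split: extract from the tuple `d` a sub-tuple multiplying to `c`. -/
def splitF : ∀ {j : ℕ}, (Fin j → ℕ) → ℕ → (Fin j → ℕ)
  | 0, _, _ => finZeroElim
  | _ + 1, d, c => Fin.cons (Nat.gcd c (d 0)) (splitF (Fin.tail d) (c / Nat.gcd c (d 0)))

lemma splitF_pos : ∀ {j : ℕ} (d : Fin j → ℕ) (c : ℕ), 1 ≤ c → (∀ i, 1 ≤ d i) →
    ∀ i, 1 ≤ splitF d c i
  | 0, _, _, _, _, i => i.elim0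
  | j + 1, d, c, hc, hd, i => by
    refine Fin.cases ?_ (fun i => ?_) i
    · exact Nat.gcd_pos_of_pos_left _ hc
    · simp only [splitF, Fin.cons_succ]
      exact splitF_pos (Fin.tail d) _
        (Nat.div_pos (Nat.le_of_dvd hc (Nat.gcd_dvd_left _ _)) (Nat.gcd_pos_of_pos_left _ hc))
        (fun i => hd i.succ) i

lemma splitF_dvd : ∀ {j : ℕ} (d : Fin j → ℕ) (c : ℕ), ∀ i, splitF d c i ∣ d i
  | 0, _, _, i => i.elim0
  | j + 1, d, c, i => by
    refine Fin.cases ?_ (fun i => ?_) i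
    · exact Nat.gcd_dvd_right _ _
    · simp only [splitF, Fin.cons_succ]
      exact splitF_dvd (Fin.tail d) _ i

lemma splitF_prod : ∀ {j : ℕ} (d : Fin j → ℕ) (c : ℕ), 1 ≤ c → (∀ i, 1 ≤ d i) →
    c ∣ ∏ i, d i → ∏ i, splitF d c i = c
  | 0, d, c, hc, _, hdvd => by
    simp only [Finset.univ_eq_empty, Finset.prod_empty]
    exact (Nat.dvd_one.mp (by simpa using hdvd)).symm
  | j + 1, d, c, hc, hd, hdvd => by
    have hg : 0 < Nat.gcd c (d 0) := Nat.gcd_pos_of_pos_left _ hc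
    have hrec : c / Nat.gcd c (d 0) ∣ ∏ i, Fin.tail d i := by
      apply div_gcd_dvd_of_dvd_mul (hd 0)
      rw [Fin.prod_univ_succ] at hdvd; exact hdvd
    rw [Fin.prod_univ_succ]
    simp only [splitF, Fin.cons_zero, Fin.cons_succ]
    rw [splitF_prod (Fin.tail d) _
      (Nat.div_pos (Nat.le_of_dvd hc (Nat.gcd_dvd_left _ _)) hg)
      (fun i => hd i.succ) hrec]
    exact Nat.mul_div_cancel' (Nat.gcd_dvd_left _ _)

/-- pointwise quotient -/
def qF {j : ℕ} (d : Fin j → ℕ) (c : ℕ) : Fin j → ℕ := fun i => d i / splitF d c i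

lemma qF_mul {j : ℕ} (d : Fin j → ℕ) (c : ℕ) (i : Fin j) :
    splitF d c i * qF d c i = d i := Nat.mul_div_cancel' (splitF_dvd d c i)

lemma qF_pos {j : ℕ} (d : Fin j → ℕ) (c : ℕ) (hd : ∀ i, 1 ≤ d i) (i : Fin j) : 1 ≤ qF d c i :=
  Nat.div_pos (Nat.le_of_dvd (hd i) (splitF_dvd d c i))
    (Nat.pos_of_dvd_of_pos (splitF_dvd d c i) (hd i))

lemma qF_prod {j : ℕ} (d : Fin j → ℕ) (c r : ℕ) (hc : 1 ≤ c) (hd : ∀ i, 1 ≤ d i)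
    (h : ∏ i, d i = c * r) : ∏ i, qF d c i = r := by
  have h1 : ∏ i, d i = (∏ i, splitF d c i) * ∏ i, qF d c i := by
    rw [← Finset.prod_mul_distrib]
    exact Finset.prod_congr rfl (fun i _ => (qF_mul d c i).symm)
  rw [splitF_prod d c hc hd ⟨r, h⟩] at h1
  have := h1.symm.trans h
  exact Nat.eq_of_mul_eq_mul_left hc this


/-- Iterated greedy split: a `j`-factorization `d` and a `k`-factorization `e` of the same
number give a `k × j` matrix whose row `i` multiplies to `e i` and column `l` to `d l`. -/
def blocksF {j : ℕ} : ∀ {k : ℕ}, (Fin k → ℕ) → (Fin j → ℕ) → (Fin k → Fin j → ℕ)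
  | 0, _, _ => finZeroElim
  | _ + 1, e, d => Fin.cons (splitF d (e 0)) (blocksF (Fin.tail e) (qF d (e 0)))

section blocks
variable {j : ℕ}

lemma blocksF_pos : ∀ {k : ℕ} (e : Fin k → ℕ) (d : Fin j → ℕ), (∀ i, 1 ≤ e i) →
    (∀ i, 1 ≤ d i) → ∀ i l, 1 ≤ blocksF e d i l
  | 0, _, _, _, _, i, _ => i.elim0
  | k + 1, e, d, he, hd, i, l => by
    refine Fin.cases ?_ (fun i => ?_) i
    · exact splitF_pos d (e 0) (he 0) hd l
    · simp only [blocksF, Fin.cons_succ]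
      exact blocksF_pos (Fin.tail e) (qF d (e 0)) (fun i => he i.succ)
        (qF_pos d (e 0) hd) i l

lemma blocksF_row : ∀ {k : ℕ} (e : Fin k → ℕ) (d : Fin j → ℕ), (∀ i, 1 ≤ e i) →
    (∀ i, 1 ≤ d i) → (∏ i, d i = ∏ i, e i) → ∀ i, ∏ l, blocksF e d i l = e i
  | 0, _, _, _, _, _, i => i.elim0
  | k + 1, e, d, he, hd, hprod, i => by
    have hprod' : ∏ i, d i = e 0 * ∏ i, Fin.tail e i := by
      rw [hprod, Fin.prod_univ_succ]; rfl
    refine Fin.cases ?_ (fun i => ?_) i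
    · exact splitF_prod d (e 0) (he 0) hd ⟨∏ i, Fin.tail e i, hprod'⟩
    · simp only [blocksF, Fin.cons_succ]
      exact blocksF_row (Fin.tail e) (qF d (e 0)) (fun i => he i.succ)
        (qF_pos d (e 0) hd) (qF_prod d (e 0) _ (he 0) hd hprod') i

lemma blocksF_col : ∀ {k : ℕ} (e : Fin k → ℕ) (d : Fin j → ℕ), (∀ i, 1 ≤ e i) →
    (∀ i, 1 ≤ d i) → (∏ i, d i = ∏ i, e i) → ∀ l, ∏ i, blocksF e d i l = d l
  | 0, e, d, _, hd, hprod, l => by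
    have h1 : ∏ i, d i = 1 := by rw [hprod]; simp
    have hdl : d l = 1 := Nat.dvd_one.mp (h1 ▸ Finset.dvd_prod_of_mem d (Finset.mem_univ l))
    simpa [hdl] using rfl
  | k + 1, e, d, he, hd, hprod, l => by
    have hprod' : ∏ i, d i = e 0 * ∏ i, Fin.tail e i := by
      rw [hprod, Fin.prod_univ_succ]; rfl
    rw [Fin.prod_univ_succ]
    simp only [blocksF, Fin.cons_zero, Fin.cons_succ]
    have IH := blocksF_col (Fin.tail e) (qF d (e 0)) (fun i => he i.succ)
      (qF_pos d (e 0) hd) (qF_prod d (e 0) _ (he 0) hd hprod') l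
    rw [show (∏ i : Fin k, blocksF (Fin.tail e) (qF d (e 0)) i l) = qF d (e 0) l from IH]
    exact qF_mul d (e 0) l

end blocks

theorem merge {j k m : ℕ} (hm : 1 ≤ m) :
    D (Fin j) m * D (Fin k) m ≤ D (Fin k × Fin j) m := by
  classical
  unfold D
  rw [← Finset.card_product]
  apply Finset.card_le_card_of_injOn
    (fun p => fun x : Fin k × Fin j => blocksF p.2 p.1 x.1 x.2)
  · rintro ⟨d, e⟩ hp
    simp only [Finset.coe_product, Set.mem_prod, Finset.mem_coe] at hp ⊢
    obtain ⟨hd, he⟩ := hp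
    rw [mem_Dset hm] at hd he ⊢
    have hprod : ∏ i, d i = ∏ i, e i := by rw [hd.2, he.2]
    refine ⟨fun x => blocksF_pos e d he.1 hd.1 x.1 x.2, ?_⟩
    rw [Fintype.prod_prod_type]
    calc ∏ i, ∏ l, blocksF e d i l = ∏ i, e i :=
          Finset.prod_congr rfl fun i _ => blocksF_row e d he.1 hd.1 hprod i
      _ = m := he.2
  · rintro ⟨d, e⟩ hp ⟨d', e'⟩ hp' h
    simp only [Finset.coe_product, Set.mem_prod, Finset.mem_coe] at hp hp'
    obtain ⟨hd, he⟩ := hp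
    obtain ⟨hd', he'⟩ := hp'
    rw [mem_Dset hm] at hd he hd' he'
    have hprod : ∏ i, d i = ∏ i, e i := by rw [hd.2, he.2]
    have hprod' : ∏ i, d' i = ∏ i, e' i := by rw [hd'.2, he'.2]
    have hB : ∀ i l, blocksF e d i l = blocksF e' d' i l := fun i l => congrFun h (i, l)
    have he2 : e = e' := funext fun i => by
      rw [← blocksF_row e d he.1 hd.1 hprod i, ← blocksF_row e' d' he'.1 hd'.1 hprod' i]
      exact Finset.prod_congr rfl fun l _ => hB i l
    have hd2 : d = d' := funext fun l => by
      rw [← blocksF_col e d he.1 hd.1 hprod l, ← blocksF_col e' d' he'.1 hd'.1 hprod' l]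
      exact Finset.prod_congr rfl fun i _ => hB i l
    exact Prod.ext hd2 he2


lemma sum_D_div_le (r N : ℕ) :
    ∑ m ∈ Icc 1 N, (D (Fin r) m : ℝ) / m ≤ (∑ a ∈ Icc 1 N, (1 : ℝ) / a) ^ r := by
  classical
  set S : Finset (Fin r → ℕ) := Fintype.piFinset fun _ : Fin r => Icc 1 N with hS
  set S' : Finset (Fin r → ℕ) := S.filter (fun f => ∏ i, f i ∈ Icc 1 N) with hS'
  have hfiber : ∀ m ∈ Icc 1 N, Dset (Fin r) m = S'.filter (fun f => ∏ i, f i = m) := by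
    intro m hmIcc
    rw [mem_Icc] at hmIcc
    ext f
    rw [mem_Dset hmIcc.1]
    simp only [hS', hS, Finset.filter_filter, mem_filter, Fintype.mem_piFinset, mem_Icc]
    constructor
    · rintro ⟨h1, h2⟩
      have hle : ∀ i, f i ≤ m := fun i =>
        Nat.le_of_dvd (h2 ▸ hmIcc.1) (h2 ▸ Finset.dvd_prod_of_mem f (mem_univ i))
      exact ⟨fun i => ⟨h1 i, (hle i).trans hmIcc.2⟩, ⟨h2 ▸ ⟨hmIcc.1, hmIcc.2⟩, h2⟩⟩
    · rintro ⟨h1, _, h2⟩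
      exact ⟨fun i => (h1 i).1, h2⟩
  have key : ∑ m ∈ Icc 1 N, (D (Fin r) m : ℝ) / m
      = ∑ m ∈ Icc 1 N, ∑ f ∈ S'.filter (fun f => ∏ i, f i = m), ∏ i, ((f i : ℝ))⁻¹ := by
    refine Finset.sum_congr rfl fun m hm => ?_
    rw [mem_Icc] at hm
    have : ∀ f ∈ S'.filter (fun f => ∏ i, f i = m), (∏ i, ((f i : ℝ))⁻¹) = (m : ℝ)⁻¹ := by
      intro f hf
      rw [← hfiber m (by rw [mem_Icc]; exact hm), mem_Dset hm.1] at hf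
      rw [← hf.2, Nat.cast_prod, Finset.prod_inv_distrib]
    rw [Finset.sum_congr rfl this, Finset.sum_const, ← hfiber m (by rw [mem_Icc]; exact hm)]
    rw [nsmul_eq_mul]
    unfold D
    rw [div_eq_mul_inv]
  rw [key]
  have step : ∑ m ∈ Icc 1 N, ∑ f ∈ S'.filter (fun f => ∏ i, f i = m), ∏ i, ((f i : ℝ))⁻¹
      = ∑ f ∈ S', ∏ i, ((f i : ℝ))⁻¹ := by
    apply Finset.sum_fiberwise_of_maps_to
    intro f hf
    rw [hS', mem_filter] at hf
    exact hf.2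
  rw [step]
  have sub : ∑ f ∈ S', ∏ i, ((f i : ℝ))⁻¹ ≤ ∑ f ∈ S, ∏ i, ((f i : ℝ))⁻¹ := by
    apply Finset.sum_le_sum_of_subset_of_nonneg (Finset.filter_subset _ _)
    intro f _ _
    exact Finset.prod_nonneg fun i _ => by positivity
  refine sub.trans ?_
  rw [Finset.sum_pow']
  apply le_of_eq
  exact Finset.sum_congr rfl fun f _ => Finset.prod_congr rfl fun i _ => (one_div _).symm


lemma hsq_le_D64 {m : ℕ} (hm : 1 ≤ m) :
    (tau4 m * m.divisors.card) ^ 2 ≤ D (Fin 64) m := by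
  have h8 : tau4 m * m.divisors.card ≤ D (Fin 8) m := by
    rw [tau4_eq_D hm, tau_eq_D hm]
    calc D (Fin 4) m * D (Fin 2) m ≤ D (Fin 2 × Fin 4) m := merge hm
      _ = D (Fin 8) m := D_equiv finProdFinEquiv m hm
  calc (tau4 m * m.divisors.card) ^ 2 ≤ D (Fin 8) m ^ 2 := Nat.pow_le_pow_left h8 2
    _ = D (Fin 8) m * D (Fin 8) m := sq (D (Fin 8) m) ▸ rfl
    _ ≤ D (Fin 8 × Fin 8) m := merge hm
    _ = D (Fin 64) m := D_equiv finProdFinEquiv m hm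

/-- The weighted sum of `(τ₄·τ)²` is at most `H^64`. -/
lemma sum_hsq_le (N : ℕ) :
    ∑ m ∈ Icc 1 N, ((tau4 m * m.divisors.card : ℕ) : ℝ) ^ 2 / m
      ≤ (∑ a ∈ Icc 1 N, (1 : ℝ) / a) ^ 64 := by
  refine le_trans (Finset.sum_le_sum fun m hm => ?_) (sum_D_div_le 64 N)
  rw [mem_Icc] at hm
  have h1 : ((tau4 m * m.divisors.card : ℕ) : ℝ) ^ 2 ≤ (D (Fin 64) m : ℝ) := by
    rw [← Nat.cast_pow]
    exact_mod_cast hsq_le_D64 hm.1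
  have hm0 : (0:ℝ) ≤ m := by positivity
  gcongr

lemma harm_le (N : ℕ) : ∑ a ∈ Icc 1 N, (1 : ℝ) / a ≤ 1 + Real.log N := by
  have h1 : ∑ a ∈ Icc 1 N, (1 : ℝ) / a = (harmonic N : ℝ) := by
    rw [harmonic_eq_sum_Icc]
    push_cast
    exact Finset.sum_congr rfl fun a _ => one_div _
  rw [h1]
  exact harmonic_le_one_add_log N

lemma harm_nonneg (N : ℕ) : 0 ≤ ∑ a ∈ Icc 1 N, (1 : ℝ) / a :=
  Finset.sum_nonneg fun a _ => by positivity


noncomputable def hf (m : ℕ) : ℝ := ((tau4 m * m.divisors.card : ℕ) : ℝ)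

lemma hf_nonneg (m : ℕ) : 0 ≤ hf m := Nat.cast_nonneg _

/-- pointwise AM-GM bound -/
lemma pointwise {m n : ℕ} (hm : 1 ≤ m) (hn : 1 ≤ n) (hlt : m < n) :
    (tau4 m : ℝ) * (m.divisors.card : ℝ) * (tau4 n : ℝ) * (n.divisors.card : ℝ)
        / (Real.sqrt (m * n) * ((n : ℝ) - (m : ℝ)))
      ≤ (hf m ^ 2 / m) / (2 * ((n:ℝ) - m)) + (hf n ^ 2 / n) / (2 * ((n:ℝ) - m)) := by
  have hm0 : (0:ℝ) < m := by exact_mod_cast hm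
  have hn0 : (0:ℝ) < n := by exact_mod_cast hn
  have hd0 : (0:ℝ) < (n:ℝ) - m := by
    have : (m:ℝ) < n := by exact_mod_cast hlt
    linarith
  have hsm : (0:ℝ) < Real.sqrt m := Real.sqrt_pos.mpr hm0
  have hsn : (0:ℝ) < Real.sqrt n := Real.sqrt_pos.mpr hn0
  have hnum : (tau4 m : ℝ) * (m.divisors.card : ℝ) * (tau4 n : ℝ) * (n.divisors.card : ℝ)
      = hf m * hf n := by unfold hf; push_cast; ring
  have hsqrt : Real.sqrt ((m:ℝ) * n) = Real.sqrt m * Real.sqrt n :=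
    Real.sqrt_mul (by positivity) _
  rw [hnum, hsqrt]
  have key : hf m * hf n / (Real.sqrt m * Real.sqrt n)
      ≤ (hf m ^ 2 / m + hf n ^ 2 / n) / 2 := by
    have e1 : hf m * hf n / (Real.sqrt m * Real.sqrt n)
        = (hf m / Real.sqrt m) * (hf n / Real.sqrt n) := by
      field_simp
    have e2 : (hf m / Real.sqrt m) ^ 2 = hf m ^ 2 / m := by
      rw [div_pow, Real.sq_sqrt hm0.le]
    have e3 : (hf n / Real.sqrt n) ^ 2 = hf n ^ 2 / n := by
      rw [div_pow, Real.sq_sqrt hn0.le]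
    rw [e1, ← e2, ← e3]
    nlinarith [sq_nonneg (hf m / Real.sqrt m - hf n / Real.sqrt n)]
  calc hf m * hf n / (Real.sqrt m * Real.sqrt n * ((n:ℝ) - m))
      = (hf m * hf n / (Real.sqrt m * Real.sqrt n)) / ((n:ℝ) - m) := by
        rw [div_div]
    _ ≤ ((hf m ^ 2 / m + hf n ^ 2 / n) / 2) / ((n:ℝ) - m) := by gcongr
    _ = (hf m ^ 2 / m) / (2 * ((n:ℝ) - m)) + (hf n ^ 2 / n) / (2 * ((n:ℝ) - m)) := by
        field_simp



lemma harm_shift1 (m N : ℕ) :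
    ∑ n ∈ (Icc 1 N).filter (fun n => m < n), 1 / ((n:ℝ) - m)
      ≤ ∑ a ∈ Icc 1 N, (1:ℝ) / a := by
  have e : ∑ n ∈ (Icc 1 N).filter (fun n => m < n), 1 / ((n:ℝ) - m)
      = ∑ a ∈ Icc 1 (N - m), (1:ℝ) / a := by
    apply Finset.sum_nbij' (i := fun n => n - m) (j := fun a => a + m)
    · intro n hn
      simp only [mem_filter, mem_Icc] at hn ⊢
      omega
    · intro a ha
      simp only [mem_filter, mem_Icc] at ha ⊢
      omega
    · intro n hn; simp only [mem_filter, mem_Icc] at hn; omega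
    · intro a ha; simp only [mem_Icc] at ha; omega
    · intro n hn
      simp only [mem_filter, mem_Icc] at hn
      rw [Nat.cast_sub hn.2.le]
  rw [e]
  apply Finset.sum_le_sum_of_subset_of_nonneg
  · exact Finset.Icc_subset_Icc_right (Nat.sub_le N m)
  · intro a _ _; positivity

lemma harm_shift2 {n N : ℕ} (hn : n ≤ N) :
    ∑ m ∈ (Icc 1 N).filter (fun m => m < n), 1 / ((n:ℝ) - m)
      ≤ ∑ a ∈ Icc 1 N, (1:ℝ) / a := by
  have e : ∑ m ∈ (Icc 1 N).filter (fun m => m < n), 1 / ((n:ℝ) - m)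
      = ∑ a ∈ Icc 1 (n - 1), (1:ℝ) / a := by
    apply Finset.sum_nbij' (i := fun m => n - m) (j := fun a => n - a)
    · intro x hx
      simp only [mem_filter, mem_Icc] at hx ⊢
      omega
    · intro a ha
      simp only [mem_filter, mem_Icc] at ha ⊢
      omega
    · intro x hx; simp only [mem_filter, mem_Icc] at hx; omega
    · intro a ha; simp only [mem_Icc] at ha; omega
    · intro x hx
      simp only [mem_filter, mem_Icc] at hx
      rw [Nat.cast_sub hx.2.le]
  rw [e]
  apply Finset.sum_le_sum_of_subset_of_nonneg
  · exact Finset.Icc_subset_Icc_right (by omega)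
  · intro a _ _; positivity


lemma main_le (N : ℕ) :
    (∑ m ∈ Icc 1 N, ∑ n ∈ Icc 1 N,
        if m < n then
          (tau4 m : ℝ) * (m.divisors.card : ℝ) * (tau4 n : ℝ) * (n.divisors.card : ℝ)
            / (Real.sqrt (m * n) * ((n : ℝ) - (m : ℝ)))
        else 0)
      ≤ (∑ a ∈ Icc 1 N, (1:ℝ) / a) ^ 65 := by
  set H := ∑ a ∈ Icc 1 N, (1:ℝ) / a with hH
  have hH0 : 0 ≤ H := Finset.sum_nonneg fun a _ => by positivity
  have step1 : (∑ m ∈ Icc 1 N, ∑ n ∈ Icc 1 N,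
        if m < n then
          (tau4 m : ℝ) * (m.divisors.card : ℝ) * (tau4 n : ℝ) * (n.divisors.card : ℝ)
            / (Real.sqrt (m * n) * ((n : ℝ) - (m : ℝ)))
        else 0)
      ≤ ∑ m ∈ Icc 1 N, ∑ n ∈ Icc 1 N,
          ((if m < n then (hf m ^ 2 / m) / (2 * ((n:ℝ) - m)) else 0)
            + (if m < n then (hf n ^ 2 / n) / (2 * ((n:ℝ) - m)) else 0)) := by
    refine Finset.sum_le_sum fun m hm => Finset.sum_le_sum fun n hn => ?_
    rw [mem_Icc] at hm hn
    by_cases hlt : m < n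
    · simp only [if_pos hlt]
      exact pointwise hm.1 hn.1 hlt
    · simp [hlt]
  refine step1.trans ?_
  have split : ∑ m ∈ Icc 1 N, ∑ n ∈ Icc 1 N,
          ((if m < n then (hf m ^ 2 / m) / (2 * ((n:ℝ) - m)) else 0)
            + (if m < n then (hf n ^ 2 / n) / (2 * ((n:ℝ) - m)) else 0))
      = (∑ m ∈ Icc 1 N, ∑ n ∈ Icc 1 N,
          (if m < n then (hf m ^ 2 / m) / (2 * ((n:ℝ) - m)) else 0))
        + (∑ m ∈ Icc 1 N, ∑ n ∈ Icc 1 N,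
          (if m < n then (hf n ^ 2 / n) / (2 * ((n:ℝ) - m)) else 0)) := by
    rw [← Finset.sum_add_distrib]
    exact Finset.sum_congr rfl fun m _ => Finset.sum_add_distrib
  rw [split]
  have inner_eq : ∀ (c : ℝ) (m : ℕ),
      ∑ n ∈ Icc 1 N, (if m < n then c / (2 * ((n:ℝ) - m)) else 0)
        = c / 2 * ∑ n ∈ (Icc 1 N).filter (fun n => m < n), 1 / ((n:ℝ) - m) := by
    intro c m
    rw [Finset.sum_filter, Finset.mul_sum]
    refine Finset.sum_congr rfl fun n _ => ?_
    by_cases hlt : m < n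
    · simp only [if_pos hlt]
      rw [div_mul_div_comm]
      ring_nf
    · simp [hlt]
  have hA : (∑ m ∈ Icc 1 N, ∑ n ∈ Icc 1 N,
      (if m < n then (hf m ^ 2 / m) / (2 * ((n:ℝ) - m)) else 0)) ≤ H ^ 64 * (H / 2) := by
    calc ∑ m ∈ Icc 1 N, ∑ n ∈ Icc 1 N,
            (if m < n then (hf m ^ 2 / m) / (2 * ((n:ℝ) - m)) else 0)
        = ∑ m ∈ Icc 1 N, (hf m ^ 2 / m) / 2
            * ∑ n ∈ (Icc 1 N).filter (fun n => m < n), 1 / ((n:ℝ) - m) :=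
          Finset.sum_congr rfl fun m _ => inner_eq _ m
      _ ≤ ∑ m ∈ Icc 1 N, (hf m ^ 2 / m) / 2 * H := by
          refine Finset.sum_le_sum fun m _ => ?_
          have hc : 0 ≤ hf m ^ 2 / (m:ℝ) / 2 := by
            have := sq_nonneg (hf m); positivity
          exact mul_le_mul_of_nonneg_left (harm_shift1 m N) hc
      _ = (∑ m ∈ Icc 1 N, hf m ^ 2 / m) * (H / 2) := by
          rw [Finset.sum_mul]
          exact Finset.sum_congr rfl fun m _ => by ring
      _ ≤ H ^ 64 * (H / 2) := by
          apply mul_le_mul_of_nonneg_right (sum_hsq_le N)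
          positivity
  have hB : (∑ m ∈ Icc 1 N, ∑ n ∈ Icc 1 N,
      (if m < n then (hf n ^ 2 / n) / (2 * ((n:ℝ) - m)) else 0)) ≤ H ^ 64 * (H / 2) := by
    rw [Finset.sum_comm]
    calc ∑ n ∈ Icc 1 N, ∑ m ∈ Icc 1 N,
            (if m < n then (hf n ^ 2 / n) / (2 * ((n:ℝ) - m)) else 0)
        = ∑ n ∈ Icc 1 N, (hf n ^ 2 / n) / 2
            * ∑ m ∈ (Icc 1 N).filter (fun m => m < n), 1 / ((n:ℝ) - m) := by
          refine Finset.sum_congr rfl fun n _ => ?_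
          rw [Finset.sum_filter, Finset.mul_sum]
          refine Finset.sum_congr rfl fun m _ => ?_
          by_cases hlt : m < n
          · simp only [if_pos hlt]
            rw [div_mul_div_comm]
            ring_nf
          · simp [hlt]
      _ ≤ ∑ n ∈ Icc 1 N, (hf n ^ 2 / n) / 2 * H := by
          refine Finset.sum_le_sum fun n hn => ?_
          rw [mem_Icc] at hn
          have hc : 0 ≤ hf n ^ 2 / (n:ℝ) / 2 := by positivity
          exact mul_le_mul_of_nonneg_left (harm_shift2 hn.2) hc
      _ = (∑ n ∈ Icc 1 N, hf n ^ 2 / n) * (H / 2) := by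
          rw [Finset.sum_mul]
          exact Finset.sum_congr rfl fun n _ => by ring
      _ ≤ H ^ 64 * (H / 2) := by
          apply mul_le_mul_of_nonneg_right (sum_hsq_le N)
          positivity
  calc _ ≤ H ^ 64 * (H / 2) + H ^ 64 * (H / 2) := add_le_add hA hB
    _ = H ^ 65 := by ring


/-- The sum over `m < n ≤ Q²` of `τ₄(m)τ(m)τ₄(n)τ(n)/(√(mn)(n-m))` is `O((log Q)^65)`. -/
theorem sum_offdiag_minus_isBigO :
    (fun Q : ℝ =>
        ∑ m ∈ Finset.Icc 1 (Nat.floor (Q ^ 2)), ∑ n ∈ Finset.Icc 1 (Nat.floor (Q ^ 2)),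
          if m < n then
            (tau4 m : ℝ) * (m.divisors.card : ℝ) * (tau4 n : ℝ) * (n.divisors.card : ℝ)
              / (Real.sqrt (m * n) * ((n : ℝ) - (m : ℝ)))
          else 0)
      =O[atTop] fun Q : ℝ => Real.log Q ^ 65 := by
  rw [Asymptotics.isBigO_iff]
  refine ⟨3 ^ 65, ?_⟩
  filter_upwards [eventually_ge_atTop (Real.exp 1)] with Q hQ
  set N := Nat.floor (Q ^ 2) with hN
  have hQ1 : (1:ℝ) ≤ Q := le_trans (by nlinarith [Real.add_one_le_exp 1]) hQ
  have hQ0 : (0:ℝ) < Q := lt_of_lt_of_le one_pos hQ1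
  have hlogQ : 1 ≤ Real.log Q := by
    rw [← Real.log_exp 1]
    exact Real.log_le_log (Real.exp_pos 1) hQ
  -- S is nonnegative
  have hS0 : 0 ≤ ∑ m ∈ Icc 1 N, ∑ n ∈ Icc 1 N,
      if m < n then
        (tau4 m : ℝ) * (m.divisors.card : ℝ) * (tau4 n : ℝ) * (n.divisors.card : ℝ)
          / (Real.sqrt (m * n) * ((n : ℝ) - (m : ℝ)))
      else 0 := by
    refine Finset.sum_nonneg fun m _ => Finset.sum_nonneg fun n _ => ?_
    by_cases hlt : m < n
    · simp only [if_pos hlt]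
      have h1 : (0:ℝ) ≤ (n:ℝ) - m := by
        have : (m:ℝ) ≤ n := by exact_mod_cast hlt.le
        linarith
      have h2 : (0:ℝ) ≤ Real.sqrt (m * n) := Real.sqrt_nonneg _
      positivity
    · simp [hlt]
  -- bound on harmonic sum
  have hNQ : (N : ℝ) ≤ Q ^ 2 := Nat.floor_le (by positivity)
  have hlogN : Real.log N ≤ 2 * Real.log Q := by
    rcases Nat.eq_zero_or_pos N with h0 | hNpos
    · rw [h0]; simp; positivity
    · calc Real.log N ≤ Real.log (Q ^ 2) :=
            Real.log_le_log (by exact_mod_cast hNpos) hNQ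
        _ = 2 * Real.log Q := by
            rw [Real.log_pow]; push_cast; ring
  have hharm : ∑ a ∈ Icc 1 N, (1:ℝ) / a ≤ 3 * Real.log Q := by
    calc ∑ a ∈ Icc 1 N, (1:ℝ) / a ≤ 1 + Real.log N := harm_le N
      _ ≤ Real.log Q + 2 * Real.log Q := add_le_add hlogQ hlogN
      _ = 3 * Real.log Q := by ring
  have hharm0 : 0 ≤ ∑ a ∈ Icc 1 N, (1:ℝ) / a :=
    Finset.sum_nonneg fun a _ => by positivity
  have hbound := (main_le N).trans (pow_le_pow_left₀ hharm0 hharm 65)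
  rw [Real.norm_of_nonneg hS0, Real.norm_of_nonneg (by positivity : (0:ℝ) ≤ Real.log Q ^ 65)]
  calc (∑ m ∈ Icc 1 N, ∑ n ∈ Icc 1 N,
        if m < n then
          (tau4 m : ℝ) * (m.divisors.card : ℝ) * (tau4 n : ℝ) * (n.divisors.card : ℝ)
            / (Real.sqrt (m * n) * ((n : ℝ) - (m : ℝ)))
        else 0)
      ≤ (3 * Real.log Q) ^ 65 := hbound
    _ = 3 ^ 65 * Real.log Q ^ 65 := by rw [mul_pow]
end
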